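/- arXiv:0902.2946 — 6 statements merged into one kernel-verified Lean document; each statement's English description precedes it below -/
import Mathlib

section
/- If Q₀ : Y → Y is a compact operator, then the kernel of L is a finite-dimensional subspace of X and dim ker L = dim ker(I − Q₀). -/
/-- If `Q₀ : Y → Y` is a compact operator, then `ker L` is a
finite-dimensional subspace of `X` and `dim ker L = dim ker (I − Q₀)`. -/
theorem stmt_4
    {X Y Z : Type*}
    [NormedAddCommGroup X] [NormedSpace ℝ X] [CompleteSpace X]
    [NormedAddCommGroup Y] [NormedSpace ℝ Y] [CompleteSpace Y]
    [NormedAddCommGroup Z] [NormedSpace ℝ Z] [CompleteSpace Z]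
    (T : X ≃L[ℝ] Y × Z)
    (P : Y →L[ℝ] X) (K : Z →L[ℝ] X)
    (hP : ∀ y : Y, P y = T.symm (y, 0))
    (hK : ∀ z : Z, K z = T.symm (0, z))
    (ℓ₀ : X →L[ℝ] Y)
    (Q₀ : Y →L[ℝ] Y) (hQ₀ : ∀ y : Y, Q₀ y = ℓ₀ (P y))
    (L : X →L[ℝ] Y × Z)
    (hL : ∀ u : X, L u = ((T u).1 - ℓ₀ u, (T u).2))
    (hcomp : IsCompactOperator ⇑Q₀) :
    FiniteDimensional ℝ (LinearMap.ker (L : X →ₗ[ℝ] Y × Z)) ∧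
    Module.finrank ℝ (LinearMap.ker (L : X →ₗ[ℝ] Y × Z)) =
      Module.finrank ℝ (LinearMap.ker ((ContinuousLinearMap.id ℝ Y - Q₀ : Y →L[ℝ] Y) : Y →ₗ[ℝ] Y)) := by
  set N : Submodule ℝ Y := LinearMap.ker ((ContinuousLinearMap.id ℝ Y - Q₀ : Y →L[ℝ] Y) : Y →ₗ[ℝ] Y) with hN
  have hmemN : ∀ w : Y, w ∈ N ↔ Q₀ w = w := by
    intro w
    simp only [hN, LinearMap.mem_ker, ContinuousLinearMap.coe_coe, ContinuousLinearMap.coe_sub',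
      Pi.sub_apply, ContinuousLinearMap.coe_id', id_eq, sub_eq_zero]
    exact eq_comm
  -- membership transfer lemmas
  have hmemL : ∀ w : Y, w ∈ N → P w ∈ LinearMap.ker (L : X →ₗ[ℝ] Y × Z) := by
    intro w hw
    rw [LinearMap.mem_ker, ContinuousLinearMap.coe_coe, hL]
    have h1 : T (P w) = (w, 0) := by rw [hP]; exact T.apply_symm_apply _
    have h2 : ℓ₀ (P w) = w := by rw [← hQ₀]; exact (hmemN w).mp hw
    rw [h1, h2]
    simp
  have hmemQ : ∀ u : X, u ∈ LinearMap.ker (L : X →ₗ[ℝ] Y × Z) → (T u).1 ∈ N := by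
    intro u hu
    rw [LinearMap.mem_ker, ContinuousLinearMap.coe_coe, hL, Prod.mk_eq_zero] at hu
    have h2 : (T u).2 = 0 := hu.2
    have h1 : (T u).1 = ℓ₀ u := sub_eq_zero.mp hu.1
    have hu' : P ((T u).1) = u := by
      rw [hP, ← h2]
      exact T.symm_apply_apply u
    rw [hmemN, hQ₀, hu', ← h1]
  have hPTu : ∀ u : X, u ∈ LinearMap.ker (L : X →ₗ[ℝ] Y × Z) → P ((T u).1) = u := by
    intro u hu
    rw [LinearMap.mem_ker, ContinuousLinearMap.coe_coe, hL, Prod.mk_eq_zero] at hu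
    rw [hP, ← hu.2]
    exact T.symm_apply_apply u
  -- the linear equivalence between the kernels
  let e : N ≃ₗ[ℝ] LinearMap.ker (L : X →ₗ[ℝ] Y × Z) :=
  { toFun := fun w => ⟨P w, hmemL w w.2⟩
    map_add' := by intro a b; ext; simp
    map_smul' := by intro c a; ext; simp
    invFun := fun u => ⟨(T (u : X)).1, hmemQ u u.2⟩
    left_inv := by
      intro w
      apply Subtype.ext
      show (T (P (w : Y))).1 = (w : Y)
      rw [hP, T.apply_symm_apply]
    right_inv := by
      intro u
      apply Subtype.ext
      exact hPTu u u.2 }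
  -- N is finite dimensional by Riesz's theorem
  have hNfd : FiniteDimensional ℝ N := by
    obtain ⟨C, hC, hCsub⟩ := hcomp.image_closedBall_subset_compact (1 : ℝ)
    have hsub : (N : Set Y) ∩ Metric.closedBall 0 1 ⊆ C := by
      rintro y ⟨hy1, hy2⟩
      have : Q₀ y = y := (hmemN y).mp hy1
      exact this ▸ hCsub ⟨y, hy2, rfl⟩
    have hclosedN : IsClosed (N : Set Y) :=
      ContinuousLinearMap.isClosed_ker (ContinuousLinearMap.id ℝ Y - Q₀)
    have hcomp2 : IsCompact ((N : Set Y) ∩ Metric.closedBall 0 1) :=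
      hC.of_isClosed_subset (hclosedN.inter Metric.isClosed_closedBall) hsub
    have hball : IsCompact (Metric.closedBall (0 : N) 1) := by
      rw [Topology.IsEmbedding.isCompact_iff Topology.IsEmbedding.subtypeVal]
      convert hcomp2 using 1
      ext y
      simp only [Set.mem_image, Metric.mem_closedBall, Set.mem_inter_iff, SetLike.mem_coe]
      constructor
      · rintro ⟨w, hw, rfl⟩
        refine ⟨w.2, ?_⟩
        simpa [Subtype.dist_eq] using hw
      · rintro ⟨h1, h2⟩
        exact ⟨⟨y, h1⟩, by simpa [Subtype.dist_eq] using h2, rfl⟩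
    exact FiniteDimensional.of_isCompact_closedBall₀ ℝ one_pos hball
  refine ⟨Module.Finite.equiv e, ?_⟩
  exact (LinearEquiv.finrank_eq e.symm)
end

section
/- If Q₀ : Y → Y is a compact operator, then the range of L is a closed subspace of Y × Z. -/
open Metric Set Filter

/-- The kernel of `1 - Q` is finite-dimensional when `Q` is compact (Riesz). -/
lemma aux_ker_findim {Y : Type*} [NormedAddCommGroup Y] [NormedSpace ℝ Y]
    (Q : Y →L[ℝ] Y) (hQ : IsCompactOperator ⇑Q) :
    FiniteDimensional ℝ (LinearMap.ker ((ContinuousLinearMap.id ℝ Y - Q : Y →L[ℝ] Y) : Y →ₗ[ℝ] Y)) := by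
  set S := ContinuousLinearMap.id ℝ Y - Q with hS
  set p := LinearMap.ker (S : Y →ₗ[ℝ] Y)
  have hfix : ∀ x ∈ p, Q x = x := by
    intro x hx
    have h2 : x - Q x = 0 := by
      simpa [hS, ContinuousLinearMap.sub_apply] using (show S x = 0 from hx)
    exact (sub_eq_zero.mp h2).symm
  -- the closed unit ball of `p` (viewed in `Y`) is compact
  have hC : IsCompact (closure (⇑Q '' closedBall (0 : Y) 1)) :=
    hQ.isCompact_closure_image_closedBall (𝕜₁ := ℝ) 1
  have hsub : ((p : Set Y) ∩ closedBall (0 : Y) 1) ⊆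
      closure (⇑Q '' closedBall (0 : Y) 1) := by
    rintro x ⟨hxp, hxb⟩
    exact subset_closure ⟨x, hxb, hfix x hxp⟩
  have hclosed : IsClosed ((p : Set Y) ∩ closedBall (0 : Y) 1) :=
    (ContinuousLinearMap.isClosed_ker S).inter Metric.isClosed_closedBall
  have hKcompact : IsCompact ((p : Set Y) ∩ closedBall (0 : Y) 1) :=
    hC.of_isClosed_subset hclosed hsub
  -- transfer to the subtype
  have hball : IsCompact (closedBall (0 : p) 1) := by
    rw [Topology.IsEmbedding.isCompact_iff (Topology.IsEmbedding.subtypeVal)]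
    have : (Subtype.val '' closedBall (0 : p) 1) =
        ((p : Set Y) ∩ closedBall (0 : Y) 1) := by
      ext x
      constructor
      · rintro ⟨⟨y, hy⟩, hyb, rfl⟩
        refine ⟨hy, ?_⟩
        simpa [Metric.mem_closedBall, dist_eq_norm] using hyb
      · rintro ⟨hxp, hxb⟩
        exact ⟨⟨x, hxp⟩, by simpa [Metric.mem_closedBall, dist_eq_norm] using hxb, rfl⟩
    rw [this]
    exact hKcompact
  exact FiniteDimensional.of_isCompact_closedBall₀ (𝕜 := ℝ) one_pos hball

/-- Riesz–Fredholm: `1 - Q` has closed range for `Q` compact. -/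
lemma aux_isClosed_range_one_sub {Y : Type*} [NormedAddCommGroup Y] [NormedSpace ℝ Y]
    [CompleteSpace Y] (Q : Y →L[ℝ] Y) (hQ : IsCompactOperator ⇑Q) :
    IsClosed ((LinearMap.range ((ContinuousLinearMap.id ℝ Y - Q : Y →L[ℝ] Y) : Y →ₗ[ℝ] Y)) : Set Y) := by
  set S := ContinuousLinearMap.id ℝ Y - Q with hS
  set p := LinearMap.ker (S : Y →ₗ[ℝ] Y) with hp
  have : FiniteDimensional ℝ p := aux_ker_findim Q hQ
  obtain ⟨M, hMclosed, hMcompl⟩ :=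
    (Submodule.ClosedComplemented.of_finiteDimensional p).exists_isClosed_isCompl
  -- `S` is bounded below on `M`
  have hbdd : ∃ c : ℝ, 0 < c ∧ ∀ x ∈ M, c * ‖x‖ ≤ ‖S x‖ := by
    by_contra hcon
    push_neg at hcon
    -- for each `n`, pick `x n ∈ M` with `‖S (x n)‖ < (1/(n+1)) ‖x n‖`
    have hpick : ∀ n : ℕ, ∃ x : Y, x ∈ M ∧ ‖x‖ = 1 ∧ ‖S x‖ < 1 / (n + 1) := by
      intro n
      obtain ⟨x, hxM, hxlt⟩ := hcon (1 / (n + 1)) (by positivity)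
      have hx0 : x ≠ 0 := by
        rintro rfl
        simp at hxlt
      refine ⟨‖x‖⁻¹ • x, M.smul_mem _ hxM, ?_, ?_⟩
      · simp [norm_smul, norm_ne_zero_iff.2 hx0, inv_mul_cancel₀]
      · rw [map_smul, norm_smul]
        have hxn : 0 < ‖x‖ := norm_pos_iff.2 hx0
        calc ‖‖x‖⁻¹‖ * ‖S x‖ = ‖x‖⁻¹ * ‖S x‖ := by
              rw [norm_inv, norm_norm]
          _ < ‖x‖⁻¹ * (1 / (n + 1) * ‖x‖) := by
              apply mul_lt_mul_of_pos_left _ (inv_pos.2 hxn)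
              linarith [hxlt]
          _ = 1 / (n + 1) := by field_simp
    choose u huM hunorm huS using hpick
    -- `Q (u n)` lies in a compact set; extract convergent subsequence
    have hC : IsCompact (closure (⇑Q '' closedBall (0 : Y) 1)) :=
      hQ.isCompact_closure_image_closedBall (𝕜₁ := ℝ) 1
    have hmem : ∀ n, Q (u n) ∈ closure (⇑Q '' closedBall (0 : Y) 1) := fun n =>
      subset_closure ⟨u n, by simp [Metric.mem_closedBall, dist_eq_norm, hunorm n], rfl⟩
    obtain ⟨y, -, φ, hφmono, hφtend⟩ := hC.tendsto_subseq hmem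
    -- `S (u n) → 0`
    have hS0 : Tendsto (fun n => S (u n)) atTop (nhds 0) := by
      rw [tendsto_iff_norm_sub_tendsto_zero]
      simp only [sub_zero]
      apply squeeze_zero (fun n => norm_nonneg _) (fun n => (huS n).le)
      exact tendsto_one_div_add_atTop_nhds_zero_nat
    have hS0' : Tendsto (fun k => S (u (φ k))) atTop (nhds 0) :=
      hS0.comp hφmono.tendsto_atTop
    -- hence `u (φ k) = S (u (φ k)) + Q (u (φ k)) → y`
    have huy : Tendsto (fun k => u (φ k)) atTop (nhds y) := by
      have : (fun k => u (φ k)) = fun k => S (u (φ k)) + Q (u (φ k)) := by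
        funext k
        simp [hS, ContinuousLinearMap.sub_apply]
      rw [this]
      simpa using hS0'.add hφtend
    have hyM : y ∈ M := hMclosed.mem_of_tendsto huy (Eventually.of_forall fun k => huM _)
    have hynorm : ‖y‖ = 1 := by
      have h1 := (continuous_norm.tendsto y).comp huy
      have hfun : ((fun a => ‖a‖) ∘ fun k => u (φ k)) = fun _ => (1 : ℝ) :=
        funext fun k => hunorm _
      rw [hfun] at h1
      exact tendsto_nhds_unique h1 tendsto_const_nhds
    have hyker : y ∈ p := by
      have h1 : Tendsto (fun k => S (u (φ k))) atTop (nhds (S y)) :=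
        (S.continuous.tendsto y).comp huy
      have : S y = 0 := tendsto_nhds_unique h1 hS0'
      exact this
    have : y = 0 := by
      have := hMcompl.inf_eq_bot
      have hy : y ∈ p ⊓ M := ⟨hyker, hyM⟩
      rw [this] at hy
      simpa using hy
    rw [this] at hynorm
    simp at hynorm
  obtain ⟨c, hc, hcb⟩ := hbdd
  -- the restriction of `S` to `M` is antilipschitz, hence has closed range
  set f : M →L[ℝ] Y := S.comp (M.subtypeL)
  have hanti : AntilipschitzWith (⟨c, hc.le⟩ : NNReal)⁻¹ f := by
    apply f.antilipschitz_of_bound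
    intro x
    have hb := hcb x x.2
    have hxn : ‖x‖ = ‖(x : Y)‖ := rfl
    have hfx : f x = S (x : Y) := rfl
    rw [hxn, hfx]
    change ‖(x : Y)‖ ≤ c⁻¹ * ‖S (x : Y)‖
    calc ‖(x : Y)‖ = c⁻¹ * (c * ‖(x : Y)‖) := by field_simp
      _ ≤ c⁻¹ * ‖S (x : Y)‖ := by
          apply mul_le_mul_of_nonneg_left hb (inv_nonneg.2 hc.le)
  have : CompleteSpace M := hMclosed.completeSpace_coe
  have hclosedrange : IsClosed (Set.range f) :=
    hanti.isClosed_range f.uniformContinuous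
  -- range S = range f
  have hrange : (LinearMap.range (S : Y →ₗ[ℝ] Y) : Set Y) = Set.range f := by
    ext w
    constructor
    · rintro ⟨x, rfl⟩
      have hx : x ∈ p ⊔ M := by rw [hMcompl.sup_eq_top]; trivial
      obtain ⟨k, hk, m, hm, rfl⟩ := Submodule.mem_sup.1 hx
      refine ⟨⟨m, hm⟩, ?_⟩
      have hk0 : S k = 0 := hk
      simp [f, map_add, hk0]
    · rintro ⟨⟨m, hm⟩, rfl⟩
      exact ⟨m, rfl⟩
  rw [hrange]
  exact hclosedrange

/-- If `Q₀ : Y → Y` is a compact operator, then the range of `L` is a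
closed subspace of `Y × Z`. -/
theorem stmt_5
    {X Y Z : Type*}
    [NormedAddCommGroup X] [NormedSpace ℝ X] [CompleteSpace X]
    [NormedAddCommGroup Y] [NormedSpace ℝ Y] [CompleteSpace Y]
    [NormedAddCommGroup Z] [NormedSpace ℝ Z] [CompleteSpace Z]
    (T : X ≃L[ℝ] Y × Z)
    (P : Y →L[ℝ] X) (K : Z →L[ℝ] X)
    (hP : ∀ y : Y, P y = T.symm (y, 0))
    (hK : ∀ z : Z, K z = T.symm (0, z))
    (ℓ₀ : X →L[ℝ] Y)
    (Q₀ : Y →L[ℝ] Y) (hQ₀ : ∀ y : Y, Q₀ y = ℓ₀ (P y))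
    (L : X →L[ℝ] Y × Z)
    (hL : ∀ u : X, L u = ((T u).1 - ℓ₀ u, (T u).2))
    (hcomp : IsCompactOperator ⇑Q₀) :
    IsClosed (LinearMap.range (L : X →ₗ[ℝ] Y × Z) : Set (Y × Z)) := by
  set S := ContinuousLinearMap.id ℝ Y - Q₀ with hS
  have hSclosed : IsClosed ((LinearMap.range (S : Y →ₗ[ℝ] Y)) : Set Y) :=
    aux_isClosed_range_one_sub Q₀ hcomp
  -- T.symm (y,z) = P y + K z
  have hdecomp : ∀ y z, T.symm (y, z) = P y + K z := by
    intro y z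
    rw [hP, hK, ← map_add]
    norm_num
  -- range L = preimage of range S under (w, z) ↦ w + ℓ₀ (K z)
  have hset : (LinearMap.range (L : X →ₗ[ℝ] Y × Z) : Set (Y × Z)) =
      (fun wz : Y × Z => wz.1 + ℓ₀ (K wz.2)) ⁻¹' (LinearMap.range (S : Y →ₗ[ℝ] Y) : Set Y) := by
    ext ⟨w, z⟩
    simp only [SetLike.mem_coe, LinearMap.mem_range, Set.mem_preimage,
      ContinuousLinearMap.coe_coe]
    constructor
    · rintro ⟨u, hu⟩
      rw [hL u] at hu
      have h1 : (T u).1 - ℓ₀ u = w := congrArg Prod.fst hu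
      have h2 : (T u).2 = z := congrArg Prod.snd hu
      refine ⟨(T u).1, ?_⟩
      have hu' : u = P (T u).1 + K (T u).2 := by
        rw [← hdecomp]
        simp
      have hℓ : ℓ₀ u = Q₀ (T u).1 + ℓ₀ (K (T u).2) := by
        rw [hQ₀]
        conv_lhs => rw [hu']
        rw [map_add]
      have hSy : S (T u).1 = (T u).1 - Q₀ (T u).1 := by
        simp [hS, ContinuousLinearMap.sub_apply]
      rw [hSy, ← h1, ← h2, hℓ]
      abel
    · rintro ⟨y, hy⟩
      refine ⟨P y + K z, ?_⟩
      rw [hL]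
      have hT : T (P y + K z) = (y, z) := by
        rw [← hdecomp]
        simp
      have hℓ : ℓ₀ (P y + K z) = Q₀ y + ℓ₀ (K z) := by
        rw [map_add, hQ₀]
      have hSy : S y = y - Q₀ y := by
        simp [hS, ContinuousLinearMap.sub_apply]
      rw [hSy] at hy
      rw [hT, hℓ]
      show (y - (Q₀ y + ℓ₀ (K z)), z) = (w, z)
      have hw : y - (Q₀ y + ℓ₀ (K z)) = w := by
        rw [show y - (Q₀ y + ℓ₀ (K z)) = y - Q₀ y - ℓ₀ (K z) from by abel, hy]
        abel
      rw [hw]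
  rw [hset]
  exact IsClosed.preimage (continuous_fst.add (ℓ₀.continuous.comp (K.continuous.comp continuous_snd))) hSclosed
end

section
/- Assume Q₀ is compact, set M := range(I − Q₀), and let P_M : Y → Y be any continuous linear projection with range M (such a projection exists since M is closed of finite codimension). Define P_r : Y × Z → Y × Z by P_r(h₁, h₂) := (P_M h₁ − (I − P_M)(ℓ₀(K h₂)), h₂). Then P_r is a continuous linear projection (P_r ∘ P_r = P_r) whose range equals range L, and range(I − P_r) = ker P_M × {0}; consequently Y × Z decomposes as the direct sum of range L and ker P_M × {0}, and the codimension of range L in Y × Z equals dim ker P_M = dim ker(I − Q₀). -/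
universe u v w

open Submodule Metric Set

variable {Y : Type*} [NormedAddCommGroup Y] [NormedSpace ℝ Y]

/-- Riesz-type point picking inside a submodule `G` relative to `F`. -/
lemma riesz_unit {G F : Submodule ℝ Y} (hFG : F ≤ G) (hFc : IsClosed (F : Set Y))
    (hx : ∃ x, x ∈ G ∧ x ∉ F) :
    ∃ x : Y, x ∈ G ∧ ‖x‖ = 1 ∧ ∀ y ∈ F, (1:ℝ)/2 ≤ ‖x - y‖ := by
  obtain ⟨x, hxG, hxF⟩ := hx
  set F' : Submodule ℝ G := F.comap G.subtype with hF'
  have hF'c : IsClosed (F' : Set G) := hFc.preimage continuous_subtype_val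
  have hwit : ∃ ξ : G, ξ ∉ F' := ⟨⟨x, hxG⟩, by simpa [hF'] using hxF⟩
  obtain ⟨ξ, hξF, hξ⟩ := riesz_lemma (𝕜 := ℝ) hF'c hwit (r := 1/2) (by norm_num)
  have hξ0 : (ξ : Y) ≠ 0 := by
    intro h
    exact hξF (by simpa [hF', Submodule.zero_mem, show ξ = 0 from Subtype.ext h])
  have hn : ‖(ξ : Y)‖ ≠ 0 := norm_ne_zero_iff.mpr hξ0
  refine ⟨‖(ξ : Y)‖⁻¹ • (ξ : Y), G.smul_mem _ ξ.2, ?_, ?_⟩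
  · simp [norm_smul, abs_of_nonneg, inv_mul_cancel₀ hn]
  · intro y hyF
    have hyG : y ∈ G := hFG hyF
    have hη : (⟨‖(ξ : Y)‖ • y, G.smul_mem _ hyG⟩ : G) ∈ F' := by
      simpa [hF'] using F.smul_mem (‖(ξ : Y)‖) hyF
    have := hξ _ hη
    have hnorm : ‖ξ - (⟨‖(ξ : Y)‖ • y, G.smul_mem _ hyG⟩ : G)‖
        = ‖(ξ : Y) - ‖(ξ : Y)‖ • y‖ := rfl
    rw [hnorm] at this
    have key : ‖‖(ξ : Y)‖⁻¹ • (ξ : Y) - y‖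
        = ‖(ξ : Y)‖⁻¹ * ‖(ξ : Y) - ‖(ξ : Y)‖ • y‖ := by
      have e : ‖(ξ:Y)‖⁻¹ • ((ξ:Y) - ‖(ξ:Y)‖ • y) = ‖(ξ:Y)‖⁻¹ • (ξ:Y) - y := by
        rw [smul_sub, smul_smul, inv_mul_cancel₀ hn, one_smul]
      rw [← e, norm_smul, Real.norm_eq_abs, abs_of_nonneg (by positivity)]
    rw [key]
    calc (1:ℝ)/2 = ‖(ξ:Y)‖⁻¹ * ((1/2) * ‖(ξ:Y)‖) := by
          field_simp
      _ ≤ ‖(ξ:Y)‖⁻¹ * ‖(ξ : Y) - ‖(ξ : Y)‖ • y‖ := by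
          apply mul_le_mul_of_nonneg_left _ (by positivity)
          simpa using this

/-- A compact operator cannot separate a bounded sequence. -/
lemma no_sep_seq {C : Y →L[ℝ] Y} (hC : IsCompactOperator ⇑C) (u : ℕ → Y)
    (hu : ∀ n, ‖u n‖ ≤ 1) (hsep : ∀ m n, m < n → (1:ℝ)/2 ≤ ‖C (u n) - C (u m)‖) : False := by
  obtain ⟨K, hK, hCK⟩ := hC.image_closedBall_subset_compact 1
  have hmem : ∀ n, C (u n) ∈ K := fun n =>
    hCK ⟨u n, by simpa [Metric.mem_closedBall, dist_eq_norm] using hu n, rfl⟩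
  obtain ⟨a, -, φ, hφ, hconv⟩ := hK.tendsto_subseq hmem
  have := Metric.tendsto_atTop.mp hconv (1/4) (by norm_num)
  obtain ⟨N, hN⟩ := this
  have h1 := hN N le_rfl
  have h2 := hN (N+1) (by omega)
  have hlt : φ N < φ (N+1) := hφ (by omega)
  have := hsep (φ N) (φ (N+1)) hlt
  have : (1:ℝ)/2 ≤ dist (C (u (φ (N+1)))) (C (u (φ N))) := by
    rwa [dist_eq_norm]
  have h3 : dist (C (u (φ (N+1)))) (C (u (φ N))) < 1/2 := by
    calc dist (C (u (φ (N+1)))) (C (u (φ N)))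
        ≤ dist (C (u (φ (N+1)))) a + dist (C (u (φ N))) a := dist_triangle_right _ _ _
      _ < 1/4 + 1/4 := add_lt_add h2 h1
      _ = 1/2 := by norm_num
  linarith

/-- The kernel of `I - C` with `C` compact is finite dimensional. -/
lemma findim_ker {C A : Y →L[ℝ] Y} (hC : IsCompactOperator ⇑C)
    (h : ∀ x, A x = x - C x) : FiniteDimensional ℝ (LinearMap.ker (A : Y →ₗ[ℝ] Y)) := by
  obtain ⟨K, hK, hCK⟩ := hC.image_closedBall_subset_compact 1
  set N : Submodule ℝ Y := LinearMap.ker (A : Y →ₗ[ℝ] Y)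
  set S : Set Y := (N : Set Y) ∩ Metric.closedBall 0 1 with hS
  have hSK : S ⊆ K := by
    rintro x ⟨hxN, hx1⟩
    have : A x = 0 := hxN
    have hx : C x = x := by
      have h0 : x - C x = 0 := (h x) ▸ this
      have := sub_eq_zero.mp h0
      exact this.symm
    exact hx ▸ hCK ⟨x, hx1, rfl⟩
  have hScl : IsClosed S := (ContinuousLinearMap.isClosed_ker A).inter Metric.isClosed_closedBall
  have hScomp : IsCompact S := hK.of_isClosed_subset hScl hSK
  have himg : Subtype.val '' (Metric.closedBall (0 : N) 1) = S := by
    ext x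
    constructor
    · rintro ⟨⟨x, hxN⟩, hball, rfl⟩
      exact ⟨hxN, by simpa [Metric.mem_closedBall, dist_eq_norm] using hball⟩
    · rintro ⟨hxN, hball⟩
      exact ⟨⟨x, hxN⟩, by simpa [Metric.mem_closedBall, dist_eq_norm] using hball, rfl⟩
  have : IsCompact (Metric.closedBall (0 : N) 1) := by
    rw [Topology.IsEmbedding.subtypeVal.isCompact_iff, himg]
    exact hScomp
  exact FiniteDimensional.of_isCompact_closedBall₀ ℝ one_pos this

/-- The range of `I - C` with `C` compact is closed. -/
lemma closed_range [CompleteSpace Y] {C A : Y →L[ℝ] Y} (hC : IsCompactOperator ⇑C)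
    (h : ∀ x, A x = x - C x) : IsClosed ((LinearMap.range (A : Y →ₗ[ℝ] Y) : Submodule ℝ Y) : Set Y) := by
  set N : Submodule ℝ Y := LinearMap.ker (A : Y →ₗ[ℝ] Y) with hN
  haveI : FiniteDimensional ℝ N := findim_ker hC h
  obtain ⟨π, hπ⟩ := Submodule.ClosedComplemented.of_finiteDimensional N
  set Cl : Submodule ℝ Y := LinearMap.ker (π : Y →ₗ[ℝ] N) with hCldef
  have hClc : IsClosed (Cl : Set Y) := ContinuousLinearMap.isClosed_ker π
  have hdisj : ∀ x, x ∈ N → x ∈ Cl → x = 0 := by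
    intro x hxN hxCl
    have h1 : π x = ⟨x, hxN⟩ := hπ ⟨x, hxN⟩
    have h2 : π x = 0 := hxCl
    exact congrArg Subtype.val (h1.symm.trans h2)
  have hbdd : ∃ c > (0:ℝ), ∀ x ∈ Cl, c * ‖x‖ ≤ ‖A x‖ := by
    by_contra hcon
    push_neg at hcon
    have hseq : ∀ n : ℕ, ∃ u : Y, u ∈ Cl ∧ ‖u‖ = 1 ∧ ‖A u‖ < 1/(n+1) := by
      intro n
      obtain ⟨x, hxCl, hx⟩ := hcon (1/(n+1)) (by positivity)
      have hx0 : x ≠ 0 := by rintro rfl; simp at hx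
      have hn : ‖x‖ ≠ 0 := norm_ne_zero_iff.mpr hx0
      refine ⟨‖x‖⁻¹ • x, Cl.smul_mem _ hxCl, ?_, ?_⟩
      · simp [norm_smul, inv_mul_cancel₀ hn]
      · rw [map_smul, norm_smul, Real.norm_eq_abs, abs_of_nonneg (by positivity)]
        calc ‖x‖⁻¹ * ‖A x‖ < ‖x‖⁻¹ * (1/(n+1) * ‖x‖) := by
              exact mul_lt_mul_of_pos_left hx (by positivity)
          _ = 1/(n+1) := by field_simp
    choose u huCl hu1 huA using hseq
    obtain ⟨K, hK, hCK⟩ := hC.image_closedBall_subset_compact 1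
    have hmem : ∀ n, C (u n) ∈ K := fun n =>
      hCK ⟨u n, by simp [Metric.mem_closedBall, dist_eq_norm, hu1 n], rfl⟩
    obtain ⟨a, -, φ, hφ, hconv⟩ := hK.tendsto_subseq hmem
    have hA0 : Filter.Tendsto (fun n => A (u (φ n))) Filter.atTop (nhds 0) := by
      apply squeeze_zero_norm (fun n => ?_) tendsto_one_div_add_atTop_nhds_zero_nat
      calc ‖A (u (φ n))‖ ≤ 1/(φ n + 1) := (huA (φ n)).le
        _ ≤ 1/(n+1) := by
            apply one_div_le_one_div_of_le (by positivity)
            have : (n:ℝ) ≤ (φ n : ℝ) := by exact_mod_cast hφ.le_apply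
            linarith
    have huconv : Filter.Tendsto (fun n => u (φ n)) Filter.atTop (nhds a) := by
      have hsum : Filter.Tendsto (fun n => A (u (φ n)) + C (u (φ n)))
          Filter.atTop (nhds a) := by simpa using hA0.add hconv
      refine hsum.congr (fun n => ?_)
      rw [h]; abel
    have ha1 : ‖a‖ = 1 := by
      have := huconv.norm
      simp_rw [hu1] at this
      exact (tendsto_nhds_unique tendsto_const_nhds this).symm
    have haCl : a ∈ Cl := hClc.mem_of_tendsto huconv (Filter.Eventually.of_forall (fun n => huCl _))
    have haN : a ∈ N := by
      have h1 : Filter.Tendsto (fun n => A (u (φ n))) Filter.atTop (nhds (A a)) :=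
        (A.continuous.tendsto a).comp huconv
      have : A a = 0 := tendsto_nhds_unique h1 hA0
      exact this
    have := hdisj a haN haCl
    rw [this] at ha1
    simp at ha1
  obtain ⟨c, hc, hbb⟩ := hbdd
  set f : Cl →L[ℝ] Y := A.comp Cl.subtypeL with hf
  have hanti : AntilipschitzWith (⟨c, hc.le⟩ : NNReal)⁻¹ f := by
    apply ContinuousLinearMap.antilipschitz_of_bound
    intro x
    have hb := hbb x x.2
    have hfx : ‖A (x:Y)‖ = ‖f x‖ := by simp [hf]
    rw [hfx] at hb
    show ‖(x:Y)‖ ≤ c⁻¹ * ‖f x‖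
    calc ‖(x:Y)‖ = c⁻¹ * (c * ‖(x:Y)‖) := by field_simp
      _ ≤ c⁻¹ * ‖f x‖ := mul_le_mul_of_nonneg_left hb (inv_pos.mpr hc).le
  haveI : CompleteSpace Cl := hClc.completeSpace_coe
  have hcl : IsClosed (Set.range ⇑f) := hanti.isClosed_range f.uniformContinuous
  have hrange : Set.range ⇑f = ((LinearMap.range (A : Y →ₗ[ℝ] Y) : Submodule ℝ Y) : Set Y) := by
    ext y
    constructor
    · rintro ⟨x, rfl⟩
      exact ⟨(x : Y), rfl⟩
    · rintro ⟨x, rfl⟩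
      have hx' : x - (π x : Y) ∈ Cl := by
        have : π ((π x : Y)) = π x := hπ (π x)
        simp [hCldef, LinearMap.mem_ker, map_sub, this]
      refine ⟨⟨x - (π x : Y), hx'⟩, ?_⟩
      have hπxN : ((π x : Y)) ∈ N := (π x).2
      have : A ((π x : Y)) = 0 := hπxN
      simp [hf, map_sub, this]
  rwa [hrange] at hcl

/-- A closed subspace plus a finite-dimensional subspace is closed. -/
lemma isClosed_sup_findim {R p : Submodule ℝ Y} (hR : IsClosed (R : Set Y))
    [FiniteDimensional ℝ p] : IsClosed ((R ⊔ p : Submodule ℝ Y) : Set Y) := by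
  letI : IsClosed (R : Set Y) := hR
  haveI : FiniteDimensional ℝ (p.map R.mkQ) := Module.Finite.map p R.mkQ
  have hclq : IsClosed ((p.map R.mkQ : Submodule ℝ (Y ⧸ R)) : Set (Y ⧸ R)) :=
    Submodule.closed_of_finiteDimensional _
  have hcont : Continuous R.mkQ := continuous_quot_mk
  have heq : (R ⊔ p : Submodule ℝ Y) = (p.map R.mkQ).comap R.mkQ := by
    rw [Submodule.comap_map_eq, Submodule.ker_mkQ, sup_comm]
  rw [heq]
  exact hclq.preimage hcont

/-- The cokernel of `I - C` with `C` compact is finite dimensional. -/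
lemma findim_coker [CompleteSpace Y] {C A : Y →L[ℝ] Y} (hC : IsCompactOperator ⇑C)
    (h : ∀ x, A x = x - C x) :
    FiniteDimensional ℝ (Y ⧸ (LinearMap.range (A : Y →ₗ[ℝ] Y) : Submodule ℝ Y)) := by
  by_contra hinf
  set R : Submodule ℝ Y := LinearMap.range (A : Y →ₗ[ℝ] Y) with hR
  have hRc : IsClosed (R : Set Y) := closed_range hC h
  letI : IsClosed (R : Set Y) := hRc
  set b := Module.Basis.ofVectorSpace ℝ (Y ⧸ R) with hb
  haveI : Infinite (Module.Basis.ofVectorSpaceIndex ℝ (Y ⧸ R)) := by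
    by_contra hfin
    haveI : Finite (Module.Basis.ofVectorSpaceIndex ℝ (Y ⧸ R)) := not_infinite_iff_finite.mp hfin
    exact hinf (Module.Finite.of_basis b)
  set emb := Infinite.natEmbedding (Module.Basis.ofVectorSpaceIndex ℝ (Y ⧸ R)) with hemb
  set e : ℕ → Y ⧸ R := fun n => b (emb n) with he
  have hindep : LinearIndependent ℝ e := b.linearIndependent.comp emb emb.injective
  have hsurj := Submodule.mkQ_surjective R
  choose y hy using fun n => hsurj (e n)
  set V : ℕ → Submodule ℝ Y := fun n => R ⊔ Submodule.span ℝ (y '' Set.Iio n) with hV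
  have hVmono : ∀ {m n : ℕ}, m ≤ n → V m ≤ V n := fun {m n} hmn =>
    sup_le_sup_left (Submodule.span_mono (Set.image_mono (Set.Iio_subset_Iio
      (by exact_mod_cast hmn)))) R
  haveI hfd : ∀ n : ℕ, FiniteDimensional ℝ (Submodule.span ℝ (y '' Set.Iio n)) := fun n =>
    FiniteDimensional.span_of_finite ℝ ((Set.finite_Iio n).image y)
  have hVc : ∀ n, IsClosed ((V n : Submodule ℝ Y) : Set Y) := fun n =>
    isClosed_sup_findim hRc
  have hymem : ∀ n : ℕ, y n ∈ V (n+1) := fun n =>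
    le_sup_right (α := Submodule ℝ Y) (Submodule.subset_span ⟨n, by simp, rfl⟩)
  have hynot : ∀ n : ℕ, y n ∉ V n := by
    intro n hmem
    rw [hV] at hmem
    obtain ⟨r, hr, s, hs, hrs⟩ := Submodule.mem_sup.mp hmem
    have h1 : R.mkQ (y n) = R.mkQ s := by
      rw [← hrs, map_add]
      have hz : R.mkQ r = 0 := by
        rw [Submodule.mkQ_apply, Submodule.Quotient.mk_eq_zero]; exact hr
      rw [hz, zero_add]
    have h2 : R.mkQ s ∈ Submodule.span ℝ (e '' Set.Iio n) := by
      have : R.mkQ s ∈ (Submodule.span ℝ (y '' Set.Iio n)).map R.mkQ :=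
        Submodule.mem_map_of_mem hs
      rw [Submodule.map_span] at this
      have himg : R.mkQ '' (y '' Set.Iio n) = e '' Set.Iio n := by
        rw [Set.image_image]
        exact Set.image_congr (fun i _ => hy i)
      rwa [himg] at this
    have h3 : e n ∈ Submodule.span ℝ (e '' Set.Iio n) := by
      rw [← hy n, h1]; exact h2
    exact hindep.notMem_span_image (by simp) h3
  have hpick : ∀ n : ℕ, ∃ x : Y, x ∈ V (n+1) ∧ ‖x‖ = 1 ∧ ∀ z ∈ V n, (1:ℝ)/2 ≤ ‖x - z‖ :=
    fun n => riesz_unit (hVmono (by omega)) (hVc n) ⟨y n, hymem n, hynot n⟩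
  choose u huV hu1 husep using hpick
  apply no_sep_seq hC u (fun n => (hu1 n).le)
  intro m n hmn
  have hCx : ∀ x : Y, C x = x - A x := by
    intro x; rw [h]; abel
  set w : Y := A (u n) + u m - A (u m) with hw
  have hwV : w ∈ V n := by
    have h1 : A (u n) ∈ V n := le_sup_left (α := Submodule ℝ Y) (LinearMap.mem_range_self _ _)
    have h2 : u m ∈ V n := hVmono (by omega) (huV m)
    have h3 : A (u m) ∈ V n := le_sup_left (α := Submodule ℝ Y) (LinearMap.mem_range_self _ _)
    exact sub_mem (add_mem h1 h2) h3
  have heqn : C (u n) - C (u m) = u n - w := by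
    rw [hCx, hCx, hw]; abel
  rw [heqn]
  exact husep n w hwV

lemma pow_eq_id_sub_compact {C A : Y →L[ℝ] Y} (hC : IsCompactOperator ⇑C)
    (h : ∀ x, A x = x - C x) (n : ℕ) :
    ∃ D : Y →L[ℝ] Y, IsCompactOperator ⇑D ∧ ∀ x, (A ^ n) x = x - D x := by
  induction n with
  | zero => exact ⟨0, isCompactOperator_zero, fun x => by simp⟩
  | succ n ih =>
    obtain ⟨D, hD, hDx⟩ := ih
    refine ⟨D + C.comp (A ^ n), ?_, ?_⟩
    · have hcoe : ⇑(D + C.comp (A ^ n)) = ⇑D + ⇑C ∘ ⇑(A ^ n) := by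
        ext x; simp
      rw [hcoe]
      exact hD.add (hC.comp_clm (A ^ n))
    · intro x
      have : (A ^ (n+1)) x = A ((A ^ n) x) := by
        rw [pow_succ']; rfl
      rw [this]
      calc A ((A ^ n) x) = (A ^ n) x - C ((A ^ n) x) := h _
        _ = (x - D x) - C ((A ^ n) x) := by nth_rewrite 1 [hDx]; rfl
        _ = x - (D x + C ((A ^ n) x)) := by abel
        _ = x - (D + C.comp (A ^ n)) x := rfl

lemma pow_apply_succ (A : Y →L[ℝ] Y) (n : ℕ) (x : Y) :
    (A ^ (n+1)) x = (A ^ n) (A x) := by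
  rw [pow_succ]; rfl

lemma pow_apply_succ' (A : Y →L[ℝ] Y) (n : ℕ) (x : Y) :
    (A ^ (n+1)) x = A ((A ^ n) x) := by
  rw [pow_succ']; rfl

lemma inj_to_surj [CompleteSpace Y] {C A : Y →L[ℝ] Y} (hC : IsCompactOperator ⇑C)
    (h : ∀ x, A x = x - C x) (hinj : Function.Injective ⇑A) :
    Function.Surjective ⇑A := by
  by_contra hsurj
  have hex : ∃ y₀, y₀ ∉ LinearMap.range (A : Y →ₗ[ℝ] Y) := by
    by_contra hcon
    push_neg at hcon
    exact hsurj (fun y => (LinearMap.mem_range).mp (hcon y))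
  obtain ⟨y₀, hy₀⟩ := hex
  set Rn : ℕ → Submodule ℝ Y := fun n => LinearMap.range ((A ^ n : Y →L[ℝ] Y) : Y →ₗ[ℝ] Y) with hRn
  have hanti : ∀ {m n : ℕ}, m ≤ n → Rn n ≤ Rn m := by
    intro m n hmn
    induction hmn with
    | refl => exact le_rfl
    | step _ ih =>
      rename_i k hk
      refine le_trans ?_ ih
      rintro _ ⟨x, rfl⟩
      exact ⟨A x, (pow_apply_succ A k x).symm⟩
  have hRc : ∀ n, IsClosed ((Rn n : Submodule ℝ Y) : Set Y) := by
    intro n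
    obtain ⟨D, hD, hDx⟩ := pow_eq_id_sub_compact hC h n
    exact closed_range hD hDx
  have hinjn : ∀ n, Function.Injective ⇑(A ^ n) := by
    intro n
    induction n with
    | zero => simp [pow_zero]; exact fun a b hab => hab
    | succ n ih =>
      intro a b hab
      rw [pow_apply_succ, pow_apply_succ] at hab
      exact hinj (ih hab)
  have hstrict : ∀ n : ℕ, (A ^ n) y₀ ∈ Rn n ∧ (A ^ n) y₀ ∉ Rn (n+1) := by
    intro n
    refine ⟨⟨y₀, rfl⟩, ?_⟩
    rintro ⟨z, hz⟩
    apply hy₀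
    rw [ContinuousLinearMap.coe_coe, pow_apply_succ] at hz
    exact ⟨z, hinjn n hz⟩
  have hpick : ∀ n : ℕ, ∃ x : Y, x ∈ Rn n ∧ ‖x‖ = 1 ∧ ∀ z ∈ Rn (n+1), (1:ℝ)/2 ≤ ‖x - z‖ :=
    fun n => riesz_unit (hanti (by omega)) (hRc (n+1))
      ⟨(A ^ n) y₀, (hstrict n).1, (hstrict n).2⟩
  choose u huR hu1 husep using hpick
  apply no_sep_seq hC u (fun n => (hu1 n).le)
  intro m n hmn
  have hCx : ∀ x : Y, C x = x - A x := fun x => by rw [h]; abel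
  rw [norm_sub_rev]
  set w : Y := A (u m) + u n - A (u n) with hw
  have hAmem : ∀ k (x : Y), x ∈ Rn k → A x ∈ Rn (k+1) := by
    rintro k _ ⟨x, rfl⟩
    exact ⟨x, pow_apply_succ' A k x⟩
  have hwV : w ∈ Rn (m+1) := by
    have h1 : A (u m) ∈ Rn (m+1) := hAmem m _ (huR m)
    have h2 : u n ∈ Rn (m+1) := hanti (by omega) (huR n)
    have h3 : A (u n) ∈ Rn (m+1) := hanti (by omega) (hAmem n _ (huR n))
    exact sub_mem (add_mem h1 h2) h3
  have heqn : C (u m) - C (u n) = u m - w := by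
    rw [hCx, hCx, hw]; abel
  rw [heqn]
  exact husep m w hwV

lemma surj_to_inj [CompleteSpace Y] {C A : Y →L[ℝ] Y} (hC : IsCompactOperator ⇑C)
    (h : ∀ x, A x = x - C x) (hsurj : Function.Surjective ⇑A) :
    Function.Injective ⇑A := by
  by_contra hinj
  have hex : ∃ x₀ : Y, A x₀ = 0 ∧ x₀ ≠ 0 := by
    rw [Function.not_injective_iff] at hinj
    obtain ⟨a, b, hab, hne⟩ := hinj
    exact ⟨a - b, by rw [map_sub, hab, sub_self], sub_ne_zero.mpr hne⟩
  obtain ⟨x₀, hx₀, hx₀0⟩ := hex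
  choose g hg using hsurj
  set x : ℕ → Y := fun n => g^[n] x₀ with hxdef
  have hx0 : x 0 = x₀ := rfl
  have hxsucc : ∀ n, A (x (n+1)) = x n := by
    intro n
    rw [hxdef]
    simp only [Function.iterate_succ_apply']
    exact hg _
  have hxn : ∀ n, (A ^ n) (x n) = x₀ := by
    intro n
    induction n with
    | zero => simp [hx0]
    | succ n ih =>
      rw [pow_apply_succ, hxsucc, ih]
  set Nn : ℕ → Submodule ℝ Y := fun n => LinearMap.ker ((A ^ n : Y →L[ℝ] Y) : Y →ₗ[ℝ] Y) with hNn
  have hmono : ∀ {m n : ℕ}, m ≤ n → Nn m ≤ Nn n := by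
    intro m n hmn
    induction hmn with
    | refl => exact le_rfl
    | step _ ih =>
      rename_i k hk
      refine le_trans ih ?_
      intro z hz
      have hz' : (A ^ k) z = 0 := hz
      have : (A ^ (k+1)) z = 0 := by rw [pow_apply_succ' A k z, hz', map_zero]
      exact this
  have hNc : ∀ n, IsClosed ((Nn n : Submodule ℝ Y) : Set Y) := by
    intro n
    obtain ⟨D, hD, hDx⟩ := pow_eq_id_sub_compact hC h n
    haveI := findim_ker hD hDx
    exact Submodule.closed_of_finiteDimensional _
  have hstrict : ∀ n : ℕ, x n ∈ Nn (n+1) ∧ x n ∉ Nn n := by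
    intro n
    constructor
    · have : (A ^ (n+1)) (x n) = 0 := by
        rw [pow_apply_succ' A n (x n), hxn, hx₀]
      exact this
    · intro hmem
      have : (A ^ n) (x n) = 0 := hmem
      rw [hxn] at this
      exact hx₀0 this
  have hpick : ∀ n : ℕ, ∃ u : Y, u ∈ Nn (n+1) ∧ ‖u‖ = 1 ∧ ∀ z ∈ Nn n, (1:ℝ)/2 ≤ ‖u - z‖ :=
    fun n => riesz_unit (hmono (by omega)) (hNc n) ⟨x n, (hstrict n).1, (hstrict n).2⟩
  choose u huN hu1 husep using hpick
  apply no_sep_seq hC u (fun n => (hu1 n).le)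
  intro m n hmn
  have hCx : ∀ z : Y, C z = z - A z := fun z => by rw [h]; abel
  set w : Y := A (u n) + u m - A (u m) with hw
  have hAmem : ∀ k (z : Y), z ∈ Nn (k+1) → A z ∈ Nn k := by
    intro k z hz
    have hz' : (A ^ (k+1)) z = 0 := hz
    have : (A ^ k) (A z) = 0 := by rw [← pow_apply_succ A k z]; exact hz'
    exact this
  have hwV : w ∈ Nn n := by
    have h1 : A (u n) ∈ Nn n := hAmem n _ (huN n)
    have h2 : u m ∈ Nn n := hmono (by omega) (huN m)
    have h3 : A (u m) ∈ Nn n := hmono (by omega) (hAmem m _ (huN m))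
    exact sub_mem (add_mem h1 h2) h3
  have heqn : C (u n) - C (u m) = u n - w := by
    rw [hCx, hCx, hw]; abel
  rw [heqn]
  exact husep n w hwV

lemma finrank_range_compact (F : Y →L[ℝ] Y) (W : Submodule ℝ Y) [FiniteDimensional ℝ W]
    (hF : ∀ x, F x ∈ W) : IsCompactOperator ⇑F := by
  have key : IsCompactOperator ⇑(F : Y →ₗ[ℝ] Y) := by
    rw [isCompactOperator_iff_image_closedBall_subset_compact (F : Y →ₗ[ℝ] Y) one_pos]
    refine ⟨Subtype.val '' (Metric.closedBall (0 : W) ‖F‖), ?_, ?_⟩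
    · exact (isCompact_closedBall _ _).image continuous_subtype_val
    · rintro _ ⟨x, hx, rfl⟩
      refine ⟨⟨F x, hF x⟩, ?_, rfl⟩
      rw [Metric.mem_closedBall, dist_zero_right]
      show ‖F x‖ ≤ ‖F‖
      calc ‖F x‖ ≤ ‖F‖ * ‖x‖ := F.le_opNorm x
        _ ≤ ‖F‖ * 1 := by
            apply mul_le_mul_of_nonneg_left _ (norm_nonneg F)
            simpa [Metric.mem_closedBall, dist_zero_right] using hx
        _ = ‖F‖ := mul_one _
  exact key

theorem fredholm_finrank [CompleteSpace Y] {C A : Y →L[ℝ] Y} (hC : IsCompactOperator ⇑C)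
    (h : ∀ x, A x = x - C x) :
    Module.finrank ℝ (LinearMap.ker (A : Y →ₗ[ℝ] Y))
      = Module.finrank ℝ (Y ⧸ (LinearMap.range (A : Y →ₗ[ℝ] Y) : Submodule ℝ Y)) := by
  classical
  set N : Submodule ℝ Y := LinearMap.ker (A : Y →ₗ[ℝ] Y) with hNdef
  set R : Submodule ℝ Y := LinearMap.range (A : Y →ₗ[ℝ] Y) with hRdef
  haveI hNfd : FiniteDimensional ℝ N := findim_ker hC h
  haveI hcofd : FiniteDimensional ℝ (Y ⧸ R) := findim_coker hC h
  obtain ⟨W, hW⟩ := Submodule.exists_isCompl R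
  have eW : (Y ⧸ R) ≃ₗ[ℝ] W := Submodule.quotientEquivOfIsCompl R W hW
  haveI hWfd : FiniteDimensional ℝ W := eW.finiteDimensional
  have hrkW : Module.finrank ℝ (Y ⧸ R) = Module.finrank ℝ W := eW.finrank_eq
  obtain ⟨π, hπ⟩ := Submodule.ClosedComplemented.of_finiteDimensional N
  -- auxiliary: build the continuous finite-rank perturbation from f : N →ₗ W
  have build : ∀ f : N →ₗ[ℝ] W, ∃ S : Y →L[ℝ] Y,
      (∃ C' : Y →L[ℝ] Y, IsCompactOperator ⇑C' ∧ ∀ x, S x = x - C' x) ∧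
      (∀ x, S x = A x + ((f (π x) : W) : Y)) := by
    intro f
    set Fc : Y →L[ℝ] Y :=
      (LinearMap.toContinuousLinearMap (W.subtype ∘ₗ f)).comp π with hFc
    have hFcx : ∀ x : Y, Fc x = ((f (π x) : W) : Y) := fun x => rfl
    have hFrange : ∀ x, Fc x ∈ W := fun x => by rw [hFcx]; exact (f (π x)).2
    have hFcomp : IsCompactOperator ⇑Fc := finrank_range_compact Fc W hFrange
    refine ⟨A + Fc, ⟨C - Fc, ?_, ?_⟩, fun x => by simp [hFcx]⟩
    · have hcoe : ⇑(C - Fc) = ⇑C - ⇑Fc := by ext x; simp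
      rw [hcoe]
      exact hC.sub hFcomp
    · intro x
      simp only [ContinuousLinearMap.add_apply, ContinuousLinearMap.sub_apply, h x]
      abel
  -- surjective linear map construction given finrank inequality
  have surj_exists : ∀ (p q : Submodule ℝ Y) [FiniteDimensional ℝ p] [FiniteDimensional ℝ q],
      Module.finrank ℝ q ≤ Module.finrank ℝ p → ∃ f : p →ₗ[ℝ] q, Function.Surjective f := by
    intro p q _ _ hle
    set bp := Module.finBasis ℝ p
    set bq := Module.finBasis ℝ q
    refine ⟨bq.equivFun.symm.toLinearMap ∘ₗ
      (LinearMap.funLeft ℝ ℝ (Fin.castLE hle)) ∘ₗ bp.equivFun.toLinearMap, ?_⟩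
    have hcoe : ⇑(bq.equivFun.symm.toLinearMap ∘ₗ
        (LinearMap.funLeft ℝ ℝ (Fin.castLE hle)) ∘ₗ bp.equivFun.toLinearMap)
        = ⇑bq.equivFun.symm ∘ ⇑(LinearMap.funLeft ℝ ℝ (Fin.castLE hle)) ∘ ⇑bp.equivFun := rfl
    rw [hcoe]
    exact bq.equivFun.symm.surjective.comp
      ((LinearMap.funLeft_surjective_of_injective ℝ ℝ _ (Fin.castLE_injective hle)).comp
        bp.equivFun.surjective)
  rw [hrkW]
  rcases le_total (Module.finrank ℝ W) (Module.finrank ℝ N) with hle | hge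
  · -- surjective f : N → W; conclude S surjective hence injective, so f injective
    obtain ⟨f, hfsurj⟩ := surj_exists N W hle
    obtain ⟨S, ⟨C', hC', hSC⟩, hSx⟩ := build f
    have hSsurj : Function.Surjective ⇑S := by
      intro y
      have hy : y ∈ R ⊔ W := by rw [hW.sup_eq_top]; trivial
      obtain ⟨r, hr, w, hw, rfl⟩ := Submodule.mem_sup.mp hy
      obtain ⟨x₀, rfl⟩ := hr
      obtain ⟨a, ha⟩ := hfsurj ⟨w, hw⟩
      refine ⟨x₀ - ((π x₀ : N) : Y) + ((a : N) : Y), ?_⟩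
      rw [hSx]
      have hA : A (x₀ - ((π x₀ : N) : Y) + ((a : N) : Y)) = A x₀ := by
        have h1 : A ((π x₀ : N) : Y) = 0 := (π x₀).2
        have h2 : A ((a : N) : Y) = 0 := a.2
        rw [map_add, map_sub, h1, h2, sub_zero, add_zero]
      have hπ' : π (x₀ - ((π x₀ : N) : Y) + ((a : N) : Y)) = a := by
        rw [map_add, map_sub, hπ (π x₀), hπ a, sub_self, zero_add]
      rw [hA, hπ', ha]; rfl
    have hSinj : Function.Injective ⇑S := surj_to_inj hC' hSC hSsurj
    have hfinj : Function.Injective ⇑f := by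
      intro a b hab
      have key : ∀ z : N, f z = 0 → z = 0 := by
        intro z hz
        have : S ((z : N) : Y) = 0 := by
          rw [hSx]
          have h1 : A ((z : N) : Y) = 0 := z.2
          have h2 : π ((z : N) : Y) = z := hπ z
          rw [h1, h2, hz, zero_add, Submodule.coe_zero]
        have := hSinj (by rw [this, map_zero] : S ((z : N) : Y) = S 0)
        exact Subtype.ext this
      have := key (a - b) (by rw [map_sub, hab, sub_self])
      exact sub_eq_zero.mp (by exact_mod_cast this)
    exact (LinearEquiv.ofBijective f ⟨hfinj, hfsurj⟩).finrank_eq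
  · -- injective s : N → W via right inverse of a surjection W → N
    obtain ⟨g, hgsurj⟩ := surj_exists W N hge
    obtain ⟨s, hgs⟩ := g.exists_rightInverse_of_surjective (LinearMap.range_eq_top.mpr hgsurj)
    have hga : ∀ a : N, g (s a) = a := by
      intro a
      rw [← LinearMap.comp_apply, hgs, LinearMap.id_apply]
    have hsinj : Function.Injective ⇑s := by
      intro a b hab
      rw [← hga a, ← hga b, hab]
    obtain ⟨S, ⟨C', hC', hSC⟩, hSx⟩ := build s
    have hSinj : Function.Injective ⇑S := by
      have hker : ∀ x, S x = 0 → x = 0 := by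
        intro x hx
        rw [hSx] at hx
        have hAx : A x = -((s (π x) : W) : Y) := eq_neg_of_add_eq_zero_left hx
        have hAW : A x ∈ W := hAx ▸ W.neg_mem (s (π x)).2
        have h0 : A x = 0 := by
          have hd := hW.disjoint
          rw [Submodule.disjoint_def] at hd
          exact hd _ (LinearMap.mem_range_self _ x) hAW
        have hs0 : ((s (π x) : W) : Y) = 0 := by
          rw [h0] at hAx
          simpa using hAx.symm
        have hπ0 : π x = 0 := by
          apply hsinj
          rw [map_zero]
          exact Subtype.ext hs0
        have hxN : x ∈ N := h0
        have he1 : π x = (⟨x, hxN⟩ : N) := hπ ⟨x, hxN⟩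
        have he2 : (⟨x, hxN⟩ : N) = 0 := by rw [← he1, hπ0]
        exact congrArg Subtype.val he2
      intro a b hab
      have : S (a - b) = 0 := by rw [map_sub, hab, sub_self]
      exact sub_eq_zero.mp (hker _ this)
    have hSsurj : Function.Surjective ⇑S := inj_to_surj hC' hSC hSinj
    have hssurj : Function.Surjective ⇑s := by
      intro w
      obtain ⟨x, hx⟩ := hSsurj ((w : W) : Y)
      rw [hSx] at hx
      have hmem : A x = ((w : W) : Y) - ((s (π x) : W) : Y) := by
        rw [← hx]; abel
      have hAW : A x ∈ W := by rw [hmem]; exact sub_mem w.2 (s (π x)).2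
      have hAR : A x ∈ R := LinearMap.mem_range_self _ x
      have h0 : A x = 0 := by
        have := hW.disjoint
        rw [Submodule.disjoint_def] at this
        exact this _ hAR hAW
      refine ⟨π x, ?_⟩
      rw [h0] at hmem
      have : ((w : W) : Y) = ((s (π x) : W) : Y) := sub_eq_zero.mp hmem.symm
      exact Subtype.ext this.symm
    exact (LinearEquiv.ofBijective s ⟨hsinj, hssurj⟩).finrank_eq

/-- With `Q₀` compact, `M := range (I − Q₀)` and `P_M : Y → Y` any continuous
linear projection with range `M`, the map `P_r (h₁, h₂) := (P_M h₁ − (I − P_M)(ℓ₀ (K h₂)), h₂)`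
is a continuous linear projection with range equal to `range L`, and
`range (I − P_r) = ker P_M × {0}`; consequently `Y × Z = range L ⊕ (ker P_M × {0})` and
`codim (range L) = dim ker P_M = dim ker (I − Q₀)`. -/
theorem stmt_6
    {X : Type u} {Y : Type v} {Z : Type w}
    [NormedAddCommGroup X] [NormedSpace ℝ X] [CompleteSpace X]
    [NormedAddCommGroup Y] [NormedSpace ℝ Y] [CompleteSpace Y]
    [NormedAddCommGroup Z] [NormedSpace ℝ Z] [CompleteSpace Z]
    (T : X ≃L[ℝ] Y × Z)
    (P : Y →L[ℝ] X) (K : Z →L[ℝ] X)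
    (hP : ∀ y : Y, P y = T.symm (y, 0))
    (hK : ∀ z : Z, K z = T.symm (0, z))
    (ℓ₀ : X →L[ℝ] Y)
    (Q₀ : Y →L[ℝ] Y) (hQ₀ : ∀ y : Y, Q₀ y = ℓ₀ (P y))
    (L : X →L[ℝ] Y × Z)
    (hL : ∀ u : X, L u = ((T u).1 - ℓ₀ u, (T u).2))
    (hcomp : IsCompactOperator ⇑Q₀)
    (P_M : Y →L[ℝ] Y)
    (hPMidem : ∀ y : Y, P_M (P_M y) = P_M y)
    (hPMrange : LinearMap.range (P_M : Y →ₗ[ℝ] Y) =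
      LinearMap.range ((ContinuousLinearMap.id ℝ Y - Q₀ : Y →L[ℝ] Y) : Y →ₗ[ℝ] Y))
    (P_r : Y × Z →L[ℝ] Y × Z)
    (hPr : ∀ p : Y × Z,
      P_r p = (P_M p.1 - (ℓ₀ (K p.2) - P_M (ℓ₀ (K p.2))), p.2)) :
    (∀ p : Y × Z, P_r (P_r p) = P_r p) ∧
    LinearMap.range (P_r : Y × Z →ₗ[ℝ] Y × Z) = LinearMap.range (L : X →ₗ[ℝ] Y × Z) ∧
    LinearMap.range ((ContinuousLinearMap.id ℝ (Y × Z) - P_r : Y × Z →L[ℝ] Y × Z) : Y × Z →ₗ[ℝ] Y × Z) =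
      (LinearMap.ker (P_M : Y →ₗ[ℝ] Y)).prod (⊥ : Submodule ℝ Z) ∧
    IsCompl (LinearMap.range (L : X →ₗ[ℝ] Y × Z)) ((LinearMap.ker (P_M : Y →ₗ[ℝ] Y)).prod (⊥ : Submodule ℝ Z)) ∧
    Module.rank ℝ ((Y × Z) ⧸ LinearMap.range (L : X →ₗ[ℝ] Y × Z)) =
      Cardinal.lift.{w} (Module.rank ℝ (LinearMap.ker (P_M : Y →ₗ[ℝ] Y))) ∧
    Module.rank ℝ (LinearMap.ker (P_M : Y →ₗ[ℝ] Y)) =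
      Module.rank ℝ (LinearMap.ker ((ContinuousLinearMap.id ℝ Y - Q₀ : Y →L[ℝ] Y) : Y →ₗ[ℝ] Y)) := by
  set A : Y →L[ℝ] Y := ContinuousLinearMap.id ℝ Y - Q₀ with hAdef
  have hA : ∀ y : Y, A y = y - Q₀ y := fun y => rfl
  have hPK : ∀ (y : Y) (z : Z), P y + K z = T.symm (y, z) := by
    intro y z
    rw [hP, hK, ← map_add]
    congr 1
    simp
  -- idempotence of P_r
  have hidem : ∀ p : Y × Z, P_r (P_r p) = P_r p := by
    intro p
    rw [hPr p, hPr]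
    simp only
    refine Prod.ext ?_ rfl
    simp only [map_sub, hPMidem]
    abel
  refine ⟨hidem, ?_⟩
  -- range P_r = range L
  have hrange : LinearMap.range (P_r : Y × Z →ₗ[ℝ] Y × Z) = LinearMap.range (L : X →ₗ[ℝ] Y × Z) := by
    apply le_antisymm
    · rintro _ ⟨⟨h₁, h₂⟩, rfl⟩
      have hm1 : P_M h₁ ∈ LinearMap.range (A : Y →ₗ[ℝ] Y) := hPMrange ▸ LinearMap.mem_range_self (P_M : Y →ₗ[ℝ] Y) h₁
      have hm2 : P_M (ℓ₀ (K h₂)) ∈ LinearMap.range (A : Y →ₗ[ℝ] Y) :=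
        hPMrange ▸ LinearMap.mem_range_self (P_M : Y →ₗ[ℝ] Y) _
      obtain ⟨y₀, hy₀⟩ := hm1
      obtain ⟨y₁, hy₁⟩ := hm2
      simp only [ContinuousLinearMap.coe_coe] at hy₀ hy₁
      refine ⟨T.symm (y₀ + y₁, h₂), ?_⟩
      simp only [ContinuousLinearMap.coe_coe]
      rw [hL]
      have hTu : T (T.symm (y₀ + y₁, h₂)) = (y₀ + y₁, h₂) := T.apply_symm_apply _
      have hu : T.symm (y₀ + y₁, h₂) = P (y₀ + y₁) + K h₂ := (hPK _ _).symm
      have hl : ℓ₀ (T.symm (y₀ + y₁, h₂)) = Q₀ (y₀ + y₁) + ℓ₀ (K h₂) := by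
        rw [hu, map_add, hQ₀]
      rw [hTu, hl, hPr]
      simp only
      refine Prod.ext ?_ rfl
      have e0 : y₀ + y₁ - (Q₀ (y₀ + y₁) + ℓ₀ (K h₂)) = A y₀ + A y₁ - ℓ₀ (K h₂) := by
        rw [hA, hA, map_add]; abel
      rw [e0, hy₀, hy₁]
      abel
    · rintro _ ⟨x, rfl⟩
      simp only [ContinuousLinearMap.coe_coe]
      rw [hL]
      have hu : x = P (T x).1 + K (T x).2 := by
        rw [hPK]
        exact (T.symm_apply_apply x).symm
      have hl : ℓ₀ x = Q₀ (T x).1 + ℓ₀ (K (T x).2) := by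
        conv_lhs => rw [hu]
        rw [map_add, hQ₀]
      have hm : A (T x).1 ∈ LinearMap.range (P_M : Y →ₗ[ℝ] Y) := by
        rw [hPMrange]
        exact LinearMap.mem_range_self (A : Y →ₗ[ℝ] Y) _
      obtain ⟨a, ha⟩ := hm
      simp only [ContinuousLinearMap.coe_coe] at ha
      refine ⟨(a - ℓ₀ (K (T x).2), (T x).2), ?_⟩
      simp only [ContinuousLinearMap.coe_coe]
      rw [hPr]
      simp only
      refine Prod.ext ?_ rfl
      rw [map_sub, ha, hl, hA]
      abel
  refine ⟨hrange, ?_⟩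
  -- range (id - P_r) = ker P_M × ⊥
  have hrange2 : LinearMap.range ((ContinuousLinearMap.id ℝ (Y × Z) - P_r : Y × Z →L[ℝ] Y × Z) : Y × Z →ₗ[ℝ] Y × Z) =
      (LinearMap.ker (P_M : Y →ₗ[ℝ] Y)).prod (⊥ : Submodule ℝ Z) := by
    apply le_antisymm
    · rintro _ ⟨⟨h₁, h₂⟩, rfl⟩
      have : (ContinuousLinearMap.id ℝ (Y × Z) - P_r) (h₁, h₂)
          = (h₁ - (P_M h₁ - (ℓ₀ (K h₂) - P_M (ℓ₀ (K h₂)))), 0) := by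
        have : P_r (h₁, h₂) = (P_M h₁ - (ℓ₀ (K h₂) - P_M (ℓ₀ (K h₂))), h₂) := hPr _
        rw [ContinuousLinearMap.sub_apply, this]
        refine Prod.ext rfl ?_
        simp
      simp only [ContinuousLinearMap.coe_coe]
      rw [this]
      constructor
      · show P_M _ = 0
        simp only [map_sub, hPMidem]
        abel
      · exact Submodule.zero_mem ⊥
    · rintro ⟨k, z⟩ ⟨hk, hz⟩
      have hz0 : z = 0 := hz
      refine ⟨(k, 0), ?_⟩
      simp only [ContinuousLinearMap.coe_coe]
      rw [ContinuousLinearMap.sub_apply, hPr]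
      have hK0 : ℓ₀ (K (0 : Z)) = 0 := by rw [map_zero, map_zero]
      have hk0 : P_M k = 0 := hk
      rw [hz0]
      refine Prod.ext ?_ ?_
      · show k - (P_M k - (ℓ₀ (K (0:Z)) - P_M (ℓ₀ (K (0:Z))))) = k
        rw [hK0, hk0, map_zero]
        abel
      · show (0:Z) - 0 = 0
        simp
  refine ⟨hrange2, ?_⟩
  -- IsCompl
  have hcompl : IsCompl (LinearMap.range (L : X →ₗ[ℝ] Y × Z)) ((LinearMap.ker (P_M : Y →ₗ[ℝ] Y)).prod (⊥ : Submodule ℝ Z)) := by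
    rw [← hrange, ← hrange2]
    constructor
    · rw [disjoint_iff_inf_le]
      rintro x ⟨⟨a, ha⟩, ⟨b, hb⟩⟩
      simp only [ContinuousLinearMap.coe_coe] at ha hb
      have h1 : P_r x = x := by rw [← ha, hidem a, ha]
      have h2 : P_r x = 0 := by
        rw [← hb]
        have : (ContinuousLinearMap.id ℝ (Y × Z) - P_r) b = b - P_r b := rfl
        rw [this, map_sub, hidem b, sub_self]
      show x ∈ (⊥ : Submodule ℝ (Y × Z))
      rw [← h1, h2]
      exact Submodule.zero_mem ⊥
    · rw [codisjoint_iff, eq_top_iff]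
      intro x _
      have : x = P_r x + (x - P_r x) := by abel
      rw [this]
      apply Submodule.add_mem_sup (LinearMap.mem_range_self (P_r : Y × Z →ₗ[ℝ] Y × Z) x)
      exact ⟨x, rfl⟩
  refine ⟨hcompl, ?_, ?_⟩
  -- rank of quotient
  · have e1 : ((Y × Z) ⧸ LinearMap.range (L : X →ₗ[ℝ] Y × Z)) ≃ₗ[ℝ]
        ((LinearMap.ker (P_M : Y →ₗ[ℝ] Y)).prod (⊥ : Submodule ℝ Z)) :=
      Submodule.quotientEquivOfIsCompl _ _ hcompl
    have e2 : ((LinearMap.ker (P_M : Y →ₗ[ℝ] Y)).prod (⊥ : Submodule ℝ Z)) ≃ₗ[ℝ]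
        (LinearMap.ker (P_M : Y →ₗ[ℝ] Y)) :=
      { toFun := fun x => ⟨x.1.1, x.2.1⟩
        map_add' := fun a b => rfl
        map_smul' := fun c a => rfl
        invFun := fun k => ⟨((k : Y), 0), ⟨k.2, Submodule.zero_mem ⊥⟩⟩
        left_inv := fun x => by
          apply Subtype.ext
          refine Prod.ext rfl ?_
          exact (x.2.2 : x.1.2 ∈ (⊥ : Submodule ℝ Z)).symm ▸ rfl
        right_inv := fun k => rfl }
    have e3 := (e1.trans e2).lift_rank_eq
    have goal : Module.rank ℝ ((Y × Z) ⧸ LinearMap.range (L : X →ₗ[ℝ] Y × Z)) =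
        Cardinal.lift.{w} (Module.rank ℝ (LinearMap.ker (P_M : Y →ₗ[ℝ] Y))) := by
      apply Cardinal.lift_injective.{v}
      rw [e3]
      simp [Cardinal.lift_lift, Cardinal.lift_umax]
    exact goal
  -- final rank equality
  · have hcompl2 : IsCompl (LinearMap.range (P_M : Y →ₗ[ℝ] Y)) (LinearMap.ker (P_M : Y →ₗ[ℝ] Y)) := by
      constructor
      · rw [disjoint_iff_inf_le]
        rintro x ⟨⟨a, ha⟩, hk⟩
        simp only [ContinuousLinearMap.coe_coe] at ha
        have : P_M x = 0 := hk
        show x ∈ (⊥ : Submodule ℝ Y)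
        rw [← ha] at this ⊢
        rw [hPMidem] at this
        rw [this]
        exact Submodule.zero_mem ⊥
      · rw [codisjoint_iff, eq_top_iff]
        intro x _
        have : x = P_M x + (x - P_M x) := by abel
        rw [this]
        apply Submodule.add_mem_sup (LinearMap.mem_range_self (P_M : Y →ₗ[ℝ] Y) x)
        show P_M (x - P_M x) = 0
        rw [map_sub, hPMidem, sub_self]
    have e4 : (Y ⧸ LinearMap.range (P_M : Y →ₗ[ℝ] Y)) ≃ₗ[ℝ] (LinearMap.ker (P_M : Y →ₗ[ℝ] Y)) :=
      Submodule.quotientEquivOfIsCompl _ _ hcompl2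
    haveI hkfd : FiniteDimensional ℝ (LinearMap.ker (A : Y →ₗ[ℝ] Y)) := findim_ker hcomp hA
    haveI hcfd : FiniteDimensional ℝ (Y ⧸ (LinearMap.range (A : Y →ₗ[ℝ] Y) : Submodule ℝ Y)) :=
      findim_coker hcomp hA
    have hfr := fredholm_finrank hcomp hA
    have er : Module.rank ℝ (LinearMap.ker (P_M : Y →ₗ[ℝ] Y))
        = Module.rank ℝ (Y ⧸ (LinearMap.range (A : Y →ₗ[ℝ] Y) : Submodule ℝ Y)) := by
      rw [← e4.rank_eq, hPMrange]
    rw [er]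
    haveI : Module.Finite ℝ (Y ⧸ (LinearMap.range (A : Y →ₗ[ℝ] Y) : Submodule ℝ Y)) := hcfd
    rw [← Module.finrank_eq_rank, ← Module.finrank_eq_rank, hfr]
end

section
/- (Lemma 2.1 of the paper, abstract form.) Assume Q₀ : Y → Y is a compact operator. Then the bounded linear operator L has a finite-dimensional kernel and a closed range of finite codimension; more precisely, dim ker L = codim(range L) = dim ker(I − Q₀) < ∞, the kernel is given by ker L = { P w : w ∈ Y, Q₀ w = w }, and both ker L (in X) and range L (in Y × Z) are complemented subspaces, i.e. admit continuous linear projections P_k and P_r onto them. -/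
set_option linter.unusedSectionVars false
set_option maxHeartbeats 1600000

open Metric Module Set Filter Topology

namespace FredholmAux

theorem compact_of_range_le {X₁ X₂ : Type*} [NormedAddCommGroup X₁] [NormedSpace ℝ X₁]
    [NormedAddCommGroup X₂] [NormedSpace ℝ X₂]
    (f : X₁ →L[ℝ] X₂) (W : Submodule ℝ X₂) [FiniteDimensional ℝ W] (h : ∀ x, f x ∈ W) :
    IsCompactOperator ⇑f := by
  set g := f.codRestrict W h with hg
  rw [isCompactOperator_iff_exists_mem_nhds_image_subset_compact]
  refine ⟨Metric.ball 0 1, Metric.ball_mem_nhds 0 one_pos,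
    Subtype.val '' Metric.closedBall (0 : W) ‖g‖,
    (isCompact_closedBall _ _).image continuous_subtype_val, ?_⟩
  rintro y ⟨x, hx, rfl⟩
  refine ⟨g x, ?_, rfl⟩
  rw [mem_closedBall, dist_zero_right]
  have h1 : ‖g x‖ ≤ ‖g‖ * ‖x‖ := g.le_opNorm x
  have h2 : ‖x‖ ≤ 1 := (mem_ball_zero_iff.mp hx).le
  nlinarith [norm_nonneg g, norm_nonneg x]

variable {Y : Type*} [NormedAddCommGroup Y] [NormedSpace ℝ Y] [CompleteSpace Y]

theorem ker_fd (Q : Y →L[ℝ] Y) (hQ : IsCompactOperator ⇑Q) :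
    FiniteDimensional ℝ (LinearMap.ker ((ContinuousLinearMap.id ℝ Y - Q : Y →L[ℝ] Y) : Y →ₗ[ℝ] Y)) := by
  set A := ContinuousLinearMap.id ℝ Y - Q with hA
  set N := LinearMap.ker (A : Y →ₗ[ℝ] Y) with hN
  have hfix : ∀ x ∈ N, Q x = x := by
    intro x hx
    have h1 : A x = 0 := hx
    have h2 : x - Q x = 0 := by simpa [hA] using h1
    exact (sub_eq_zero.mp h2).symm
  have hK := hQ.isCompact_closure_image_closedBall 1
  have hNc : IsClosed (N : Set Y) := ContinuousLinearMap.isClosed_ker A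
  have hSsub : (N : Set Y) ∩ closedBall 0 1 ⊆ closure (⇑Q '' closedBall 0 1) := by
    rintro x ⟨hxN, hxB⟩
    exact subset_closure ⟨x, hxB, hfix x hxN⟩
  have hScompact : IsCompact ((N : Set Y) ∩ closedBall 0 1) :=
    hK.of_isClosed_subset (hNc.inter Metric.isClosed_closedBall) hSsub
  have himg : Subtype.val '' (closedBall (0 : N) 1) = (N : Set Y) ∩ closedBall 0 1 := by
    ext y
    constructor
    · rintro ⟨x, hx, rfl⟩
      refine ⟨x.2, ?_⟩
      simpa [mem_closedBall, dist_eq_norm] using (mem_closedBall.mp hx)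
    · rintro ⟨hyN, hyB⟩
      exact ⟨⟨y, hyN⟩, by simpa [mem_closedBall, dist_eq_norm] using hyB, rfl⟩
  have hcb : IsCompact (closedBall (0 : N) 1) := by
    rw [Topology.IsEmbedding.subtypeVal.isCompact_iff, himg]
    exact hScompact
  exact FiniteDimensional.of_isCompact_closedBall₀ ℝ one_pos hcb

theorem riesz_step {G F : Submodule ℝ Y} (hFc : IsClosed (F : Set Y)) (hle : F ≤ G)
    (hne : ¬ G ≤ F) :
    ∃ x : Y, x ∈ G ∧ ‖x‖ = 1 ∧ ∀ y ∈ F, (1 : ℝ) / 2 ≤ ‖x - y‖ := by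
  set F' : Submodule ℝ G := F.comap G.subtype with hF'
  have hF'c : IsClosed (F' : Set G) := hFc.preimage continuous_subtype_val
  obtain ⟨g, hgG, hgF⟩ := SetLike.not_le_iff_exists.mp hne
  have hex : ∃ x : G, x ∉ F' := ⟨⟨g, hgG⟩, by simpa [hF', Submodule.mem_comap] using hgF⟩
  obtain ⟨x₀, hx₀, hdist⟩ := riesz_lemma hF'c hex (by norm_num : (1 : ℝ) / 2 < 1)
  have hx0 : x₀ ≠ 0 := fun h => hx₀ (h ▸ F'.zero_mem)
  have hnx : ‖x₀‖ ≠ 0 := norm_ne_zero_iff.mpr hx0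
  refine ⟨‖x₀‖⁻¹ • (x₀ : Y), G.smul_mem _ x₀.2, ?_, ?_⟩
  · have : ((x₀ : Y)) ≠ 0 := fun h => hx0 (Subtype.ext h)
    have hnc : ‖(x₀ : Y)‖ = ‖x₀‖ := rfl
    rw [norm_smul, norm_inv, norm_norm, hnc, inv_mul_cancel₀ hnx]
  · intro y hy
    set y' : G := ⟨y, hle hy⟩ with hy'
    have hmem : (‖x₀‖ • y') ∈ F' := F'.smul_mem _ (by simpa [hF', Submodule.mem_comap] using hy)
    have hd := hdist _ hmem
    have key : ‖x₀‖⁻¹ • (x₀ : Y) - y = ‖x₀‖⁻¹ • ((x₀ : Y) - ‖x₀‖ • y) := by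
      rw [smul_sub, smul_smul, inv_mul_cancel₀ hnx, one_smul]
    have hsub : ((x₀ - ‖x₀‖ • y' : G) : Y) = (x₀ : Y) - ‖x₀‖ • y := rfl
    have hnorm_eq : ‖(x₀ : Y) - ‖x₀‖ • y‖ = ‖x₀ - ‖x₀‖ • y'‖ := by rw [← hsub]; rfl
    rw [key, norm_smul, norm_inv, norm_norm, hnorm_eq]
    have hpos : 0 < ‖x₀‖ := lt_of_le_of_ne (norm_nonneg _) (Ne.symm hnx)
    have h2 : 1 / 2 * ‖x₀‖ ≤ ‖x₀ - ‖x₀‖ • y'‖ := hd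
    calc (1 : ℝ) / 2 = ‖x₀‖⁻¹ * (1 / 2 * ‖x₀‖) := by
          rw [← mul_assoc, mul_comm ‖x₀‖⁻¹, mul_assoc, inv_mul_cancel₀ hnx, mul_one]
      _ ≤ ‖x₀‖⁻¹ * ‖x₀ - ‖x₀‖ • y'‖ := by
          exact mul_le_mul_of_nonneg_left h2 (inv_nonneg.mpr hpos.le)

theorem pow_eq (Q : Y →L[ℝ] Y) (hQ : IsCompactOperator ⇑Q) (n : ℕ) :
    ∃ Q' : Y →L[ℝ] Y, IsCompactOperator ⇑Q' ∧
      (ContinuousLinearMap.id ℝ Y - Q) ^ n = ContinuousLinearMap.id ℝ Y - Q' := by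
  induction n with
  | zero =>
      exact ⟨0, isCompactOperator_zero, by
        simp [pow_zero, sub_zero, ContinuousLinearMap.one_def]⟩
  | succ n ih =>
      obtain ⟨Q', hQ', hev⟩ := ih
      refine ⟨Q + Q' - Q'.comp Q, ?_, ?_⟩
      · have hco : ⇑(Q + Q' - Q'.comp Q) = (⇑Q + ⇑Q') - (⇑Q' ∘ ⇑Q) := by
          ext x; simp
        rw [hco]
        exact (hQ.add hQ').sub (hQ'.comp_clm Q)
      · rw [pow_succ, hev]
        ext x
        simp [ContinuousLinearMap.mul_apply, map_sub, sub_sub]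
        abel

theorem closed_range (Q : Y →L[ℝ] Y) (hQ : IsCompactOperator ⇑Q) :
    IsClosed ((LinearMap.range ((ContinuousLinearMap.id ℝ Y - Q : Y →L[ℝ] Y) : Y →ₗ[ℝ] Y) : Submodule ℝ Y) : Set Y) := by
  set A := ContinuousLinearMap.id ℝ Y - Q with hA
  have hAx : ∀ x : Y, A x = x - Q x := fun x => rfl
  set N := LinearMap.ker (A : Y →ₗ[ℝ] Y) with hN
  haveI : FiniteDimensional ℝ N := ker_fd Q hQ
  obtain ⟨M, hMc, hcompl⟩ :=
    (Submodule.ClosedComplemented.of_finiteDimensional N).exists_isClosed_isCompl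
  -- A is bounded below on M
  have hbb : ∃ c : ℝ, 0 < c ∧ ∀ x ∈ M, c * ‖x‖ ≤ ‖A x‖ := by
    by_contra hc
    push_neg at hc
    have hseq : ∀ n : ℕ, ∃ u : Y, u ∈ M ∧ ‖u‖ = 1 ∧ ‖A u‖ < 1 / (n + 1) := by
      intro n
      obtain ⟨x, hxM, hx⟩ := hc (1 / (n + 1)) (by positivity)
      have hx0 : x ≠ 0 := by
        rintro rfl; simp at hx
      have hnx : ‖x‖ ≠ 0 := norm_ne_zero_iff.mpr hx0
      refine ⟨‖x‖⁻¹ • x, M.smul_mem _ hxM, norm_smul_inv_norm hx0, ?_⟩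
      rw [map_smul, norm_smul, norm_inv, norm_norm]
      have h2 : ‖x‖⁻¹ * ‖A x‖ < ‖x‖⁻¹ * (1 / (n + 1) * ‖x‖) :=
        mul_lt_mul_of_pos_left hx (by positivity)
      calc ‖x‖⁻¹ * ‖A x‖ < ‖x‖⁻¹ * (1 / (n + 1) * ‖x‖) := h2
        _ = 1 / (n + 1) := by
            rw [mul_comm (1 / ((n : ℝ) + 1)), ← mul_assoc, inv_mul_cancel₀ hnx, one_mul]
    choose u hM h1 hAu using hseq
    have hK := hQ.isCompact_closure_image_closedBall 1
    have hmem : ∀ n, Q (u n) ∈ closure (⇑Q '' closedBall 0 1) := fun n =>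
      subset_closure ⟨u n, by simp [mem_closedBall, dist_eq_norm, h1 n], rfl⟩
    obtain ⟨y, -, φ, hφ, hconv⟩ := hK.tendsto_subseq hmem
    have hAtend : Tendsto (fun n => A (u (φ n))) atTop (𝓝 0) := by
      refine squeeze_zero_norm (a := fun n : ℕ => 1 / ((n : ℝ) + 1)) (fun n => ?_)
        tendsto_one_div_add_atTop_nhds_zero_nat
      have h3 : ‖A (u (φ n))‖ < 1 / ((φ n : ℝ) + 1) := hAu (φ n)
      have h5 : ((n : ℝ) + 1) ≤ ((φ n : ℝ) + 1) := by
        have h6 : n ≤ φ n := hφ.le_apply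
        have h7 : (n : ℝ) ≤ (φ n : ℝ) := by exact_mod_cast h6
        linarith
      have h4 : (1 : ℝ) / ((φ n : ℝ) + 1) ≤ 1 / ((n : ℝ) + 1) :=
        one_div_le_one_div_of_le (by positivity) h5
      linarith
    have hutend : Tendsto (fun n => u (φ n)) atTop (𝓝 y) := by
      have heq : (fun n => u (φ n)) = fun n => A (u (φ n)) + Q (u (φ n)) := by
        funext n; rw [hAx]; abel
      rw [heq]
      simpa using hAtend.add hconv
    have hyM : y ∈ M := hMc.mem_of_tendsto hutend (Eventually.of_forall fun n => hM _)
    have hy1 : ‖y‖ = 1 := by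
      have := hutend.norm
      simp only [h1] at this
      exact tendsto_nhds_unique this tendsto_const_nhds
    have hyker : A y = 0 :=
      tendsto_nhds_unique ((A.continuous.tendsto y).comp hutend) hAtend
    have hyN : y ∈ N := LinearMap.mem_ker.mpr hyker
    have : y ∈ N ⊓ M := ⟨hyN, hyM⟩
    rw [hcompl.inf_eq_bot] at this
    rw [Submodule.mem_bot] at this
    rw [this, norm_zero] at hy1
    norm_num at hy1
  obtain ⟨c, hc, hcb⟩ := hbb
  set f := A.comp M.subtypeL with hf
  haveI : CompleteSpace M := hMc.completeSpace_coe
  have hanti : AntilipschitzWith (Real.toNNReal c⁻¹) ⇑f := by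
    apply f.antilipschitz_of_bound
    intro x
    have h5 : c * ‖x‖ ≤ ‖f x‖ := by
      have := hcb (x : Y) x.2
      simpa [hf] using this
    have h6 := mul_le_mul_of_nonneg_left h5 (inv_nonneg.mpr hc.le)
    rw [← mul_assoc, inv_mul_cancel₀ hc.ne', one_mul] at h6
    rw [Real.coe_toNNReal _ (inv_nonneg.mpr hc.le)]
    exact h6
  have hclosed : IsClosed (Set.range ⇑f) := hanti.isClosed_range f.uniformContinuous
  have hrange : (LinearMap.range (A : Y →ₗ[ℝ] Y) : Set Y) = Set.range ⇑f := by
    ext x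
    constructor
    · rintro ⟨z, rfl⟩
      obtain ⟨a, haN, b, hbM, rfl⟩ := Submodule.mem_sup.mp
        (by rw [hcompl.sup_eq_top]; exact Submodule.mem_top : z ∈ N ⊔ M)
      refine ⟨⟨b, hbM⟩, ?_⟩
      have ha0 : A a = 0 := haN
      simp [hf, map_add, ha0]
    · rintro ⟨z, rfl⟩
      exact ⟨z, rfl⟩
  rw [hrange]
  exact hclosed

theorem no_separated_seq (Q : Y →L[ℝ] Y) (hQ : IsCompactOperator ⇑Q) (xs : ℕ → Y)
    (h1 : ∀ n, ‖xs n‖ = 1)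
    (hsep : ∀ m k, m < k → (1 : ℝ) / 2 ≤ ‖Q (xs m) - Q (xs k)‖) : False := by
  have hK := hQ.isCompact_closure_image_closedBall 1
  have hmem : ∀ n, Q (xs n) ∈ closure (⇑Q '' closedBall 0 1) := fun n =>
    subset_closure ⟨xs n, by simp [mem_closedBall, dist_eq_norm, h1 n], rfl⟩
  obtain ⟨l, -, φ, hφ, hconv⟩ := hK.tendsto_subseq hmem
  obtain ⟨N, hN⟩ := (Metric.tendsto_atTop.mp hconv) (1 / 4) (by norm_num)
  have h2 := hN N le_rfl
  have h3 := hN (N + 1) (Nat.le_succ N)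
  have hlt : φ N < φ (N + 1) := hφ (Nat.lt_succ_self N)
  have h4 := hsep (φ N) (φ (N + 1)) hlt
  have h5 : ‖Q (xs (φ N)) - Q (xs (φ (N + 1)))‖ < 1 / 2 := by
    have := dist_triangle (Q (xs (φ N))) l (Q (xs (φ (N + 1))))
    rw [dist_eq_norm, dist_eq_norm, dist_eq_norm] at this
    simp only [Function.comp_apply, dist_eq_norm] at h2 h3
    have h6 : ‖l - Q (xs (φ (N + 1)))‖ = ‖Q (xs (φ (N + 1))) - l‖ := norm_sub_rev _ _
    calc ‖Q (xs (φ N)) - Q (xs (φ (N + 1)))‖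
        ≤ ‖Q (xs (φ N)) - l‖ + ‖l - Q (xs (φ (N + 1)))‖ := this
      _ < 1 / 4 + 1 / 4 := by rw [h6]; exact add_lt_add h2 h3
      _ = 1 / 2 := by norm_num
  linarith

theorem surj_of_inj (Q : Y →L[ℝ] Y) (hQ : IsCompactOperator ⇑Q)
    (hinj : Function.Injective ⇑(ContinuousLinearMap.id ℝ Y - Q)) :
    Function.Surjective ⇑(ContinuousLinearMap.id ℝ Y - Q) := by
  set A := ContinuousLinearMap.id ℝ Y - Q with hA
  by_contra hsurj
  rw [Function.Surjective] at hsurj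
  push_neg at hsurj
  obtain ⟨y₀, hy₀⟩ := hsurj
  set Rn : ℕ → Submodule ℝ Y := fun n => LinearMap.range ((A ^ n : Y →L[ℝ] Y) : Y →ₗ[ℝ] Y) with hRn
  have hRclosed : ∀ n, IsClosed ((Rn n : Submodule ℝ Y) : Set Y) := by
    intro n
    obtain ⟨Q', hQ', hev⟩ := pow_eq Q hQ n
    have : Rn n = LinearMap.range ((ContinuousLinearMap.id ℝ Y - Q' : Y →L[ℝ] Y) : Y →ₗ[ℝ] Y) := by
      simp only [hRn]; rw [hA, hev]
    rw [this]
    exact closed_range Q' hQ'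
  have hpow1 : ∀ (n : ℕ) (x : Y), (A ^ (n + 1)) x = (A ^ n) (A x) := fun n x => by
    rw [pow_succ]; rfl
  have hpow2 : ∀ (n : ℕ) (x : Y), (A ^ (n + 1)) x = A ((A ^ n) x) := fun n x => by
    rw [pow_succ']; rfl
  have hanti : ∀ n, Rn (n + 1) ≤ Rn n := by
    rintro n _ ⟨x, rfl⟩
    exact ⟨A x, (hpow1 n x).symm⟩
  have hchain : ∀ m k, m ≤ k → Rn k ≤ Rn m := fun m k h =>
    antitone_nat_of_succ_le hanti h
  have hinjn : ∀ n, Function.Injective ⇑(A ^ n) := by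
    intro n
    induction n with
    | zero => simp [pow_zero, ContinuousLinearMap.one_def]; exact fun a b h => h
    | succ n ih =>
        have : ⇑(A ^ (n + 1)) = ⇑A ∘ ⇑(A ^ n) := funext (hpow2 n)
        rw [this]
        exact hinj.comp ih
  have hstrict : ∀ n, ¬ Rn n ≤ Rn (n + 1) := by
    intro n hle
    obtain ⟨x, hx⟩ := hle ⟨y₀, rfl⟩
    simp only [ContinuousLinearMap.coe_coe] at hx; rw [hpow1 n x] at hx
    exact hy₀ x (hinjn n hx)
  choose xs hxsG hxs1 hxsd using fun n => riesz_step (hRclosed (n + 1)) (hanti n) (hstrict n)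
  refine no_separated_seq Q hQ xs hxs1 ?_
  intro m k hmk
  have hQx : ∀ j, Q (xs j) = xs j - A (xs j) := fun j => by
    have : A (xs j) = xs j - Q (xs j) := rfl
    rw [this]; abel
  have hw : A (xs m) + (xs k - A (xs k)) ∈ Rn (m + 1) := by
    refine Submodule.add_mem _ ?_ (Submodule.sub_mem _ ?_ ?_)
    · obtain ⟨z, hz⟩ := hxsG m
      exact ⟨z, by simp only [ContinuousLinearMap.coe_coe] at hz ⊢; rw [hpow2 m z, hz]⟩
    · exact hchain (m + 1) k hmk (hxsG k)
    · obtain ⟨z, hz⟩ := hxsG k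
      have : A (xs k) ∈ Rn (k + 1) := ⟨z, by simp only [ContinuousLinearMap.coe_coe] at hz ⊢; rw [hpow2 k z, hz]⟩
      exact hchain (m + 1) (k + 1) (Nat.succ_le_succ hmk.le) this
  have := hxsd m _ hw
  calc (1 : ℝ) / 2 ≤ ‖xs m - (A (xs m) + (xs k - A (xs k)))‖ := this
    _ = ‖Q (xs m) - Q (xs k)‖ := by rw [hQx m, hQx k]; congr 1; abel

theorem inj_of_surj (Q : Y →L[ℝ] Y) (hQ : IsCompactOperator ⇑Q)
    (hsurj : Function.Surjective ⇑(ContinuousLinearMap.id ℝ Y - Q)) :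
    Function.Injective ⇑(ContinuousLinearMap.id ℝ Y - Q) := by
  set A := ContinuousLinearMap.id ℝ Y - Q with hA
  have hker : (∀ x, A x = 0 → x = 0) → Function.Injective ⇑A := by
    intro h a b hab
    have : A (a - b) = 0 := by rw [map_sub, hab, sub_self]
    exact sub_eq_zero.mp (h _ this)
  by_contra hninj
  have hexk : ∃ x₁, A x₁ = 0 ∧ x₁ ≠ 0 := by
    by_contra hno
    push_neg at hno
    exact hninj (hker fun x hx => hno x hx)
  obtain ⟨x₁, hx₁0, hx₁⟩ := hexk
  choose sec hsec using hsurj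
  set v : ℕ → Y := fun n => Nat.rec x₁ (fun _ prev => sec prev) n with hv
  have hv0 : v 0 = x₁ := rfl
  have hvs : ∀ n, A (v (n + 1)) = v n := fun n => hsec (v n)
  have hpow1 : ∀ (n : ℕ) (x : Y), (A ^ (n + 1)) x = (A ^ n) (A x) := fun n x => by
    rw [pow_succ]; rfl
  have hpow2 : ∀ (n : ℕ) (x : Y), (A ^ (n + 1)) x = A ((A ^ n) x) := fun n x => by
    rw [pow_succ']; rfl
  have hvpow : ∀ n, (A ^ n) (v n) = x₁ := by
    intro n
    induction n with
    | zero => simp [pow_zero, ContinuousLinearMap.one_def, hv0]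
    | succ n ih => rw [hpow1 n (v (n + 1)), hvs n, ih]
  set Nn : ℕ → Submodule ℝ Y := fun n => LinearMap.ker ((A ^ n : Y →L[ℝ] Y) : Y →ₗ[ℝ] Y) with hNn
  have hNclosed : ∀ n, IsClosed ((Nn n : Submodule ℝ Y) : Set Y) := fun n =>
    ContinuousLinearMap.isClosed_ker _
  have hmono : ∀ n, Nn n ≤ Nn (n + 1) := by
    intro n x hx
    have hx' : (A ^ n) x = 0 := hx
    show (A ^ (n + 1)) x = 0
    rw [hpow2 n x, hx', map_zero]
  have hchain : ∀ m k, m ≤ k → Nn m ≤ Nn k := fun m k h =>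
    monotone_nat_of_le_succ hmono h
  have hstrict : ∀ n, ¬ Nn (n + 1) ≤ Nn n := by
    intro n hle
    have hmem : v n ∈ Nn (n + 1) := by
      show (A ^ (n + 1)) (v n) = 0
      rw [hpow2 n (v n), hvpow n, hx₁0]
    have : (A ^ n) (v n) = 0 := hle hmem
    rw [hvpow n] at this
    exact hx₁ this
  choose xs hxsG hxs1 hxsd using fun n => riesz_step (hNclosed n) (hmono n) (hstrict n)
  refine no_separated_seq Q hQ xs hxs1 ?_
  intro m k hmk
  have hQx : ∀ j, Q (xs j) = xs j - A (xs j) := fun j => by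
    have : A (xs j) = xs j - Q (xs j) := rfl
    rw [this]; abel
  have hw : A (xs k) + (xs m - A (xs m)) ∈ Nn k := by
    refine Submodule.add_mem _ ?_ (Submodule.sub_mem _ ?_ ?_)
    · show (A ^ k) (A (xs k)) = 0
      rw [← hpow1 k (xs k)]
      exact hxsG k
    · exact hchain (m + 1) k hmk (hxsG m)
    · have : A (xs m) ∈ Nn m := by
        show (A ^ m) (A (xs m)) = 0
        rw [← hpow1 m (xs m)]
        exact hxsG m
      exact hchain m k hmk.le this
  have := hxsd k _ hw
  calc (1 : ℝ) / 2 ≤ ‖xs k - (A (xs k) + (xs m - A (xs m)))‖ := this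
    _ = ‖Q (xs k) - Q (xs m)‖ := by rw [hQx m, hQx k]; congr 1; abel
    _ = ‖Q (xs m) - Q (xs k)‖ := norm_sub_rev _ _

theorem coker_fd (Q : Y →L[ℝ] Y) (hQ : IsCompactOperator ⇑Q) :
    ∃ _ : FiniteDimensional ℝ (Y ⧸ LinearMap.range ((ContinuousLinearMap.id ℝ Y - Q : Y →L[ℝ] Y) : Y →ₗ[ℝ] Y)),
      finrank ℝ (Y ⧸ LinearMap.range ((ContinuousLinearMap.id ℝ Y - Q : Y →L[ℝ] Y) : Y →ₗ[ℝ] Y))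
        = finrank ℝ (LinearMap.ker ((ContinuousLinearMap.id ℝ Y - Q : Y →L[ℝ] Y) : Y →ₗ[ℝ] Y)) := by
  classical
  set A := ContinuousLinearMap.id ℝ Y - Q with hA
  have hAx : ∀ x : Y, A x = x - Q x := fun x => rfl
  haveI hN : FiniteDimensional ℝ (LinearMap.ker (A : Y →ₗ[ℝ] Y)) := ker_fd Q hQ
  set n := finrank ℝ (LinearMap.ker (A : Y →ₗ[ℝ] Y)) with hn
  set b : Basis (Fin n) ℝ (LinearMap.ker (A : Y →ₗ[ℝ] Y)) := finBasis ℝ (LinearMap.ker (A : Y →ₗ[ℝ] Y)) with hb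
  obtain ⟨pr, hpr⟩ := Submodule.ClosedComplemented.of_finiteDimensional (LinearMap.ker (A : Y →ₗ[ℝ] Y))
  set π := (LinearMap.range (A : Y →ₗ[ℝ] Y)).mkQ with hπ
  have hπA : ∀ x : Y, π (A x) = 0 := by
    intro x
    rw [hπ, Submodule.mkQ_apply]
    exact (Submodule.Quotient.mk_eq_zero _).mpr ⟨x, rfl⟩
  by_cases hex : ∃ q : Fin n → Y ⧸ LinearMap.range (A : Y →ₗ[ℝ] Y), LinearIndependent ℝ q
  · obtain ⟨q, hq⟩ := hex
    have hmkq : Function.Surjective π := Submodule.mkQ_surjective _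
    set w : Fin n → Y := fun i => Function.surjInv hmkq (q i) with hw
    have hwq : ∀ i, π (w i) = q i := fun i => Function.surjInv_eq hmkq (q i)
    set g : (LinearMap.ker (A : Y →ₗ[ℝ] Y)) →ₗ[ℝ] Y := Basis.constr b ℝ w with hgdef
    set gC : (LinearMap.ker (A : Y →ₗ[ℝ] Y)) →L[ℝ] Y := LinearMap.toContinuousLinearMap g with hgC
    set F : Y →L[ℝ] Y := gC.comp pr with hF
    have hFval : ∀ x : Y, F x = g (pr x) := fun x => rfl
    have hFW : ∀ x : Y, F x ∈ Submodule.span ℝ (Set.range w) := by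
      intro x
      rw [hFval, hgdef, Basis.constr_apply_fintype]
      exact Submodule.sum_mem _ fun i _ =>
        Submodule.smul_mem _ _ (Submodule.subset_span (mem_range_self i))
    haveI : FiniteDimensional ℝ (Submodule.span ℝ (Set.range w)) :=
      FiniteDimensional.span_of_finite ℝ (finite_range w)
    have hFc : IsCompactOperator ⇑F := compact_of_range_le F _ hFW
    have hQF : IsCompactOperator ⇑(Q - F) := by
      have : ⇑(Q - F) = ⇑Q - ⇑F := by ext x; simp
      rw [this]; exact hQ.sub hFc
    set A' := ContinuousLinearMap.id ℝ Y - (Q - F) with hA'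
    have hA'x : ∀ x : Y, A' x = A x + F x := by
      intro x; simp [hA', hA]; abel
    have hπF : ∀ x : Y, π (F x) = ∑ i, b.equivFun (pr x) i • q i := by
      intro x
      rw [hFval, hgdef, Basis.constr_apply_fintype, map_sum]
      congr 1
      funext i
      rw [map_smul, hwq]
    have hinj' : Function.Injective ⇑A' := by
      intro a c hac
      have h0 : A' (a - c) = 0 := by rw [map_sub, hac, sub_self]
      rw [hA'x] at h0
      set x := a - c with hx
      have h1 : π (A x) + π (F x) = 0 := by rw [← map_add, h0, map_zero]
      rw [hπA x, zero_add, hπF x] at h1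
      have hcoef : ∀ i, b.equivFun (pr x) i = 0 := Fintype.linearIndependent_iff.mp hq _ h1
      have hpr0 : pr x = 0 := by
        have : b.equivFun (pr x) = 0 := funext hcoef
        exact b.equivFun.map_eq_zero_iff.mp this
      have hF0 : F x = 0 := by rw [hFval, hpr0, map_zero]
      have hA0 : A x = 0 := by rwa [hF0, add_zero] at h0
      have hxker : x ∈ LinearMap.ker (A : Y →ₗ[ℝ] Y) := LinearMap.mem_ker.mpr hA0
      have := hpr ⟨x, hxker⟩
      rw [Submodule.coe_mk] at this
      rw [hpr0] at this
      have hx0 : x = 0 := by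
        have := congrArg (Subtype.val) this.symm
        simpa using this
      exact sub_eq_zero.mp hx0
    have hsurj' : Function.Surjective ⇑A' :=
      surj_of_inj (Q - F) hQF hinj'
    have hspan : ⊤ ≤ Submodule.span ℝ (Set.range q) := by
      intro z _
      obtain ⟨y, rfl⟩ := hmkq z
      obtain ⟨x, hx⟩ := hsurj' y
      have : π y = π (F x) := by
        rw [← hx, hA'x, map_add, hπA, zero_add]
      rw [this, hπF]
      exact Submodule.sum_mem _ fun i _ =>
        Submodule.smul_mem _ _ (Submodule.subset_span (mem_range_self i))
    set β : Basis (Fin n) ℝ (Y ⧸ LinearMap.range (A : Y →ₗ[ℝ] Y)) := Basis.mk hq hspan with hβ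
    haveI hfd : FiniteDimensional ℝ (Y ⧸ LinearMap.range (A : Y →ₗ[ℝ] Y)) :=
      Module.Finite.of_basis β
    refine ⟨hfd, ?_⟩
    rw [finrank_eq_card_basis β, Fintype.card_fin]
  · exfalso
    haveI hFD : FiniteDimensional ℝ (Y ⧸ LinearMap.range (A : Y →ₗ[ℝ] Y)) := by
      by_contra hnf
      have hrank : (n : Cardinal) ≤ Module.rank ℝ (Y ⧸ LinearMap.range (A : Y →ₗ[ℝ] Y)) := by
        have h1 : ¬ Module.rank ℝ (Y ⧸ LinearMap.range (A : Y →ₗ[ℝ] Y)) < Cardinal.aleph0 := by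
          intro hlt
          exact hnf (Module.rank_lt_aleph0_iff.mp hlt)
        push_neg at h1
        exact le_trans (Cardinal.nat_lt_aleph0 n).le h1
      obtain ⟨s, hcard, hli⟩ := le_rank_iff_exists_linearIndependent_finset.mp hrank
      have e : Fin n ≃ {x // x ∈ s} := (s.equivFin.trans (finCongr hcard)).symm
      exact hex ⟨fun i => ↑(e i), hli.comp e e.injective⟩
    set m := finrank ℝ (Y ⧸ LinearMap.range (A : Y →ₗ[ℝ] Y)) with hm
    have hmn : m < n := by
      by_contra hge
      push_neg at hge
      set β : Basis (Fin m) ℝ (Y ⧸ LinearMap.range (A : Y →ₗ[ℝ] Y)) := finBasis ℝ _ with hβ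
      exact hex ⟨fun i => β (Fin.castLE hge i),
        β.linearIndependent.comp _ (Fin.castLE_injective hge)⟩
    set β : Basis (Fin m) ℝ (Y ⧸ LinearMap.range (A : Y →ₗ[ℝ] Y)) := finBasis ℝ _ with hβ
    have hmkq : Function.Surjective π := Submodule.mkQ_surjective _
    set w : Fin m → Y := fun i => Function.surjInv hmkq (β i) with hw
    have hwq : ∀ i, π (w i) = β i := fun i => Function.surjInv_eq hmkq (β i)
    set w' : Fin n → Y := fun i => if h : (i : ℕ) < m then w ⟨i, h⟩ else 0 with hw'
    set g : (LinearMap.ker (A : Y →ₗ[ℝ] Y)) →ₗ[ℝ] Y := Basis.constr b ℝ w' with hgdef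
    set gC : (LinearMap.ker (A : Y →ₗ[ℝ] Y)) →L[ℝ] Y := LinearMap.toContinuousLinearMap g with hgC
    set F : Y →L[ℝ] Y := gC.comp pr with hF
    have hFval : ∀ x : Y, F x = g (pr x) := fun x => rfl
    have hFW : ∀ x : Y, F x ∈ Submodule.span ℝ (Set.range w') := by
      intro x
      rw [hFval, hgdef, Basis.constr_apply_fintype]
      exact Submodule.sum_mem _ fun i _ =>
        Submodule.smul_mem _ _ (Submodule.subset_span (mem_range_self i))
    haveI : FiniteDimensional ℝ (Submodule.span ℝ (Set.range w')) :=
      FiniteDimensional.span_of_finite ℝ (finite_range w')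
    have hFc : IsCompactOperator ⇑F := compact_of_range_le F _ hFW
    have hQF : IsCompactOperator ⇑(Q - F) := by
      have : ⇑(Q - F) = ⇑Q - ⇑F := by ext x; simp
      rw [this]; exact hQ.sub hFc
    set A' := ContinuousLinearMap.id ℝ Y - (Q - F) with hA'
    have hA'x : ∀ x : Y, A' x = A x + F x := by
      intro x; simp [hA', hA]; abel
    -- π ∘ g hits every basis vector, hence is surjective
    have htop : ∀ j : Fin m, ∃ k : ↥(LinearMap.ker (A : Y →ₗ[ℝ] Y)), π (g k) = β j := by
      intro j
      have hj : (j : ℕ) < m := j.2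
      have hjn : (j : ℕ) < n := lt_trans hj hmn
      refine ⟨b ⟨j, hjn⟩, ?_⟩
      have h1 : g (b ⟨j, hjn⟩) = w' ⟨j, hjn⟩ := by
        rw [hgdef]; exact Basis.constr_basis b ℝ w' _
      have h2 : w' ⟨j, hjn⟩ = w j := by
        simp only [hw']
        rw [dif_pos hj]
      rw [h1, h2, hwq]
    have hhit : ∀ z : Y ⧸ LinearMap.range (A : Y →ₗ[ℝ] Y), ∃ k : ↥(LinearMap.ker (A : Y →ₗ[ℝ] Y)), π (g k) = z := by
      have hrange : LinearMap.range (π ∘ₗ g) = ⊤ := by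
        rw [eq_top_iff, ← β.span_eq, Submodule.span_le]
        rintro _ ⟨j, rfl⟩
        obtain ⟨k, hk⟩ := htop j
        exact ⟨k, hk⟩
      intro z
      have hz : z ∈ LinearMap.range (π ∘ₗ g) := hrange ▸ Submodule.mem_top
      obtain ⟨k, hk⟩ := hz
      exact ⟨k, hk⟩
    have hsurj' : Function.Surjective ⇑A' := by
      intro y
      obtain ⟨k, hk⟩ := hhit (π y)
      have hmem : y - g k ∈ LinearMap.range (A : Y →ₗ[ℝ] Y) := by
        have : π (y - g k) = 0 := by rw [map_sub, hk, sub_self]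
        rwa [hπ, Submodule.mkQ_apply, Submodule.Quotient.mk_eq_zero] at this
      obtain ⟨x₀, hx₀⟩ := hmem
      refine ⟨x₀ + ((k : Y) - ((pr x₀ : ↥(LinearMap.ker (A : Y →ₗ[ℝ] Y))) : Y)), ?_⟩
      have hAk : A (k : Y) = 0 := k.2
      have hAp : A ((pr x₀ : ↥(LinearMap.ker (A : Y →ₗ[ℝ] Y))) : Y) = 0 := (pr x₀).2
      have hprk : pr ((k : Y)) = k := hpr k
      have hprp : pr (((pr x₀) : Y)) = pr x₀ := hpr (pr x₀)
      have hprsum : pr (x₀ + ((k : Y) - ((pr x₀) : Y))) = k := by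
        rw [map_add, map_sub, hprk, hprp]
        abel
      rw [ContinuousLinearMap.coe_coe] at hx₀; rw [hA'x, map_add, map_sub, hAk, hAp, hx₀]
      rw [hFval, hprsum]
      abel
    have hinj' : Function.Injective ⇑A' := inj_of_surj (Q - F) hQF hsurj'
    -- but A' kills a nonzero vector
    have hidx : m < n := hmn
    set i₀ : Fin n := ⟨m, hidx⟩ with hi₀
    have hw'0 : w' i₀ = 0 := by
      simp only [hw']
      rw [dif_neg]
      exact lt_irrefl m
    have hg0 : g (b i₀) = 0 := by
      rw [hgdef, Basis.constr_basis, hw'0]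
    have hb0 : A' ((b i₀ : Y)) = 0 := by
      rw [hA'x]
      have h1 : A ((b i₀ : Y)) = 0 := (b i₀).2
      have h2 : F ((b i₀ : Y)) = 0 := by
        rw [hFval, hpr (b i₀), hg0]
      rw [h1, h2, add_zero]
    have := hinj' (a₁ := ((b i₀ : Y))) (a₂ := 0) (by rw [hb0, map_zero])
    have hbne : b i₀ ≠ 0 := b.ne_zero i₀
    exact hbne (by exact_mod_cast this)

theorem proj_of_closedComplemented {E : Type*} [NormedAddCommGroup E] [NormedSpace ℝ E]
    {p : Submodule ℝ E} (h : p.ClosedComplemented) :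
    ∃ Pp : E →L[ℝ] E, (∀ x, Pp (Pp x) = Pp x) ∧ LinearMap.range (Pp : E →ₗ[ℝ] E) = p := by
  obtain ⟨f, hf⟩ := h
  refine ⟨p.subtypeL.comp f, fun x => ?_, ?_⟩
  · show ((f ((f x : E)) : E)) = ((f x : E))
    rw [hf (f x)]
  · apply le_antisymm
    · rintro _ ⟨x, rfl⟩
      exact (f x).2
    · intro x hx
      exact ⟨x, congrArg Subtype.val (hf ⟨x, hx⟩)⟩

end FredholmAux

open FredholmAux Module

/-- Lemma 2.1, abstract form: if `Q₀` is compact then `L` has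
finite-dimensional kernel and closed range of finite codimension, with
`dim ker L = codim (range L) = dim ker (I − Q₀) < ∞`, the kernel is
`{ P w : Q₀ w = w }`, and both `ker L` and `range L` are complemented, i.e. admit
continuous linear projections onto them. -/
theorem stmt_7
    {X Y Z : Type*}
    [NormedAddCommGroup X] [NormedSpace ℝ X] [CompleteSpace X]
    [NormedAddCommGroup Y] [NormedSpace ℝ Y] [CompleteSpace Y]
    [NormedAddCommGroup Z] [NormedSpace ℝ Z] [CompleteSpace Z]
    (T : X ≃L[ℝ] Y × Z)
    (P : Y →L[ℝ] X) (K : Z →L[ℝ] X)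
    (hP : ∀ y : Y, P y = T.symm (y, 0))
    (hK : ∀ z : Z, K z = T.symm (0, z))
    (ℓ₀ : X →L[ℝ] Y)
    (Q₀ : Y →L[ℝ] Y) (hQ₀ : ∀ y : Y, Q₀ y = ℓ₀ (P y))
    (L : X →L[ℝ] Y × Z)
    (hL : ∀ u : X, L u = ((T u).1 - ℓ₀ u, (T u).2))
    (hcomp : IsCompactOperator ⇑Q₀) :
    FiniteDimensional ℝ (LinearMap.ker (L : X →ₗ[ℝ] Y × Z)) ∧
    IsClosed (LinearMap.range (L : X →ₗ[ℝ] Y × Z) : Set (Y × Z)) ∧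
    FiniteDimensional ℝ ((Y × Z) ⧸ LinearMap.range (L : X →ₗ[ℝ] Y × Z)) ∧
    Module.finrank ℝ (LinearMap.ker (L : X →ₗ[ℝ] Y × Z)) =
      Module.finrank ℝ (LinearMap.ker ((ContinuousLinearMap.id ℝ Y - Q₀ : Y →L[ℝ] Y) : Y →ₗ[ℝ] Y)) ∧
    Module.finrank ℝ ((Y × Z) ⧸ LinearMap.range (L : X →ₗ[ℝ] Y × Z)) =
      Module.finrank ℝ (LinearMap.ker ((ContinuousLinearMap.id ℝ Y - Q₀ : Y →L[ℝ] Y) : Y →ₗ[ℝ] Y)) ∧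
    (LinearMap.ker (L : X →ₗ[ℝ] Y × Z) : Set X) = ⇑P '' {w : Y | Q₀ w = w} ∧
    (∃ P_k : X →L[ℝ] X,
      (∀ x : X, P_k (P_k x) = P_k x) ∧ LinearMap.range (P_k : X →ₗ[ℝ] X) = LinearMap.ker (L : X →ₗ[ℝ] Y × Z)) ∧
    (∃ P_r : Y × Z →L[ℝ] Y × Z,
      (∀ p : Y × Z, P_r (P_r p) = P_r p) ∧ LinearMap.range (P_r : Y × Z →ₗ[ℝ] Y × Z) = LinearMap.range (L : X →ₗ[ℝ] Y × Z)) := by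
  classical
  set A : Y →L[ℝ] Y := ContinuousLinearMap.id ℝ Y - Q₀ with hA
  have hAx : ∀ y : Y, A y = y - Q₀ y := fun y => rfl
  set R : Z →L[ℝ] Y := ℓ₀.comp K with hR
  have hsplit : ∀ (y : Y) (z : Z), T.symm (y, z) = P y + K z := by
    intro y z
    rw [hP, hK, ← map_add]
    congr 1
    simp [Prod.ext_iff]
  have hL' : ∀ (y : Y) (z : Z), L (T.symm (y, z)) = (y - Q₀ y - R z, z) := by
    intro y z
    rw [hL]
    have h1 : T (T.symm (y, z)) = (y, z) := T.apply_symm_apply _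
    rw [h1]
    have h2 : ℓ₀ (T.symm (y, z)) = Q₀ y + R z := by
      rw [hsplit, map_add, hQ₀]
      rfl
    rw [h2]
    have h3 : y - (Q₀ y + R z) = y - Q₀ y - R z := by abel
    simp [h3]
  -- kernel set equality
  have hker_set : (LinearMap.ker (L : X →ₗ[ℝ] Y × Z) : Set X) = ⇑P '' {w : Y | Q₀ w = w} := by
    ext u
    constructor
    · intro hu
      have hu0 : L u = 0 := hu
      rw [hL u] at hu0
      have h1 : (T u).1 - ℓ₀ u = 0 := congrArg Prod.fst hu0
      have h2 : (T u).2 = 0 := congrArg Prod.snd hu0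
      have h3 : ℓ₀ u = (T u).1 := (sub_eq_zero.mp h1).symm
      have h4 : u = P ((T u).1) := by
        rw [hP]
        have : ((T u).1, (0 : Z)) = T u := by
          rw [← h2]
        rw [this, T.symm_apply_apply]
      refine ⟨(T u).1, ?_, h4.symm⟩
      show Q₀ ((T u).1) = (T u).1
      rw [hQ₀, ← h4, h3]
    · rintro ⟨w, hw, rfl⟩
      have hw' : Q₀ w = w := hw
      show L (P w) = 0
      rw [hP, hL' w 0]
      simp [hw']
  -- kernel as a mapped submodule
  have hPinj : Function.Injective ⇑P := by
    intro a b hab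
    rw [hP, hP] at hab
    have := T.symm.injective hab
    exact (Prod.ext_iff.mp this).1
  have hker_eq_set : {w : Y | Q₀ w = w} = (LinearMap.ker (A : Y →ₗ[ℝ] Y) : Set Y) := by
    ext w
    simp only [Set.mem_setOf_eq, SetLike.mem_coe, LinearMap.mem_ker]
    rw [ContinuousLinearMap.coe_coe, hAx]
    constructor
    · intro h; rw [h]; abel
    · intro h; have := sub_eq_zero.mp h; exact this.symm
  have hker_sub : LinearMap.ker (L : X →ₗ[ℝ] Y × Z) = Submodule.map (P : Y →ₗ[ℝ] X) (LinearMap.ker (A : Y →ₗ[ℝ] Y)) := by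
    apply SetLike.ext'
    rw [hker_set, hker_eq_set, Submodule.map_coe]
    rfl
  haveI hkerA_fd : FiniteDimensional ℝ (LinearMap.ker (A : Y →ₗ[ℝ] Y)) := ker_fd Q₀ hcomp
  set e := Submodule.equivMapOfInjective (P : Y →ₗ[ℝ] X) hPinj (LinearMap.ker (A : Y →ₗ[ℝ] Y)) with he
  haveI hkerL_fd : FiniteDimensional ℝ (LinearMap.ker (L : X →ₗ[ℝ] Y × Z)) := by
    rw [hker_sub]
    exact e.finiteDimensional
  have hkerL_rank : finrank ℝ (LinearMap.ker (L : X →ₗ[ℝ] Y × Z)) = finrank ℝ (LinearMap.ker (A : Y →ₗ[ℝ] Y)) := by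
    rw [hker_sub]
    exact (e.finrank_eq).symm
  -- range
  set ψ : Y × Z →L[ℝ] Y :=
    ContinuousLinearMap.fst ℝ Y Z + R.comp (ContinuousLinearMap.snd ℝ Y Z) with hψ
  have hψx : ∀ p : Y × Z, ψ p = p.1 + R p.2 := fun p => rfl
  have hrange_set : (LinearMap.range (L : X →ₗ[ℝ] Y × Z) : Set (Y × Z)) = ⇑ψ ⁻¹' (LinearMap.range (A : Y →ₗ[ℝ] Y) : Set Y) := by
    ext p
    constructor
    · rintro ⟨u, rfl⟩
      have hu : u = T.symm ((T u).1, (T u).2) := by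
        rw [Prod.mk.eta, T.symm_apply_apply]
      have hLu : L u = ((T u).1 - Q₀ (T u).1 - R (T u).2, (T u).2) := by
        conv_lhs => rw [hu]
        exact hL' _ _
      show ψ (L u) ∈ (LinearMap.range (A : Y →ₗ[ℝ] Y) : Set Y)
      rw [hLu, hψx]
      refine ⟨(T u).1, ?_⟩
      rw [ContinuousLinearMap.coe_coe, hAx]
      show (T u).1 - Q₀ (T u).1 = (T u).1 - Q₀ (T u).1 - R (T u).2 + R (T u).2
      abel
    · rintro ⟨y, hy⟩
      rw [hψx] at hy
      rw [ContinuousLinearMap.coe_coe, hAx] at hy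
      refine ⟨T.symm (y, p.2), ?_⟩
      rw [ContinuousLinearMap.coe_coe, hL' y p.2]
      have : y - Q₀ y - R p.2 = p.1 := by rw [hy]; abel
      rw [this]
  have hclosedA := closed_range Q₀ hcomp
  have hclosed_range : IsClosed (LinearMap.range (L : X →ₗ[ℝ] Y × Z) : Set (Y × Z)) := by
    rw [hrange_set]
    exact hclosedA.preimage ψ.continuous
  -- quotient equivalence
  set φ : (Y × Z) →ₗ[ℝ] Y ⧸ LinearMap.range (A : Y →ₗ[ℝ] Y) :=
    (LinearMap.range (A : Y →ₗ[ℝ] Y)).mkQ.comp (ψ : Y × Z →ₗ[ℝ] Y) with hφ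
  have hφsurj : Function.Surjective φ := by
    intro z
    obtain ⟨y, rfl⟩ := Submodule.mkQ_surjective _ z
    exact ⟨(y, 0), by simp [hφ, hψx]⟩
  have hkerφ : LinearMap.ker φ = LinearMap.range (L : X →ₗ[ℝ] Y × Z) := by
    apply SetLike.ext'
    rw [hrange_set]
    ext p
    simp only [hφ, SetLike.mem_coe, LinearMap.mem_ker, LinearMap.comp_apply,
      Set.mem_preimage, Submodule.mkQ_apply, Submodule.Quotient.mk_eq_zero]
    rfl
  set eq1 := (Submodule.quotEquivOfEq (LinearMap.range (L : X →ₗ[ℝ] Y × Z)) (LinearMap.ker φ) hkerφ.symm).trans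
    (φ.quotKerEquivOfSurjective hφsurj) with heq1
  obtain ⟨hcokerA_fd, hcokerA_rank⟩ := coker_fd Q₀ hcomp
  haveI : FiniteDimensional ℝ (Y ⧸ LinearMap.range (A : Y →ₗ[ℝ] Y)) := hcokerA_fd
  haveI hcokerL_fd : FiniteDimensional ℝ ((Y × Z) ⧸ LinearMap.range (L : X →ₗ[ℝ] Y × Z)) :=
    eq1.symm.finiteDimensional
  have hcokerL_rank : finrank ℝ ((Y × Z) ⧸ LinearMap.range (L : X →ₗ[ℝ] Y × Z))
      = finrank ℝ (LinearMap.ker (A : Y →ₗ[ℝ] Y)) := by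
    rw [eq1.finrank_eq]
    exact hcokerA_rank
  -- projections
  have hPk := proj_of_closedComplemented
    (Submodule.ClosedComplemented.of_finiteDimensional (LinearMap.ker (L : X →ₗ[ℝ] Y × Z)))
  have hPr := proj_of_closedComplemented
    (Submodule.ClosedComplemented.of_quotient_finiteDimensional
      (p := LinearMap.range (L : X →ₗ[ℝ] Y × Z)) hclosed_range)
  exact ⟨hkerL_fd, hclosed_range, hcokerL_fd, hkerL_rank, hcokerL_rank, hker_set, hPk, hPr⟩
end

section
/- For every pair (g, h) ∈ Y × Z there exists a unique pair (ζ, w) ∈ ℝ × X such that P_k w = 0 and L w = (ζ B + g, −h). (This is the unique solvability of the bordered linear system underlying the computation of the direction of bifurcation.) -/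
open Filter Topology

lemma compact_inj_bound {Y : Type*} [NormedAddCommGroup Y] [NormedSpace ℝ Y]
    (Kc : Y →L[ℝ] Y) (hc : IsCompactOperator ⇑Kc)
    (hinj : Function.Injective ⇑(1 - Kc : Y →L[ℝ] Y)) :
    ∃ c : ℝ, 0 < c ∧ ∀ y, c * ‖y‖ ≤ ‖y - Kc y‖ := by
  by_contra hcon
  push_neg at hcon
  have hex : ∀ n : ℕ, ∃ u : Y, ‖u‖ = 1 ∧ ‖u - Kc u‖ < 1 / (n + 1) := by
    intro n
    obtain ⟨y, hy⟩ := hcon (1 / (n + 1)) (by positivity)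
    have hy0 : y ≠ 0 := by
      rintro rfl; simp at hy
    refine ⟨‖y‖⁻¹ • y, ?_, ?_⟩
    · simp [norm_smul, inv_mul_cancel₀ (norm_ne_zero_iff.mpr hy0)]
    · have hny : (0:ℝ) < ‖y‖ := norm_pos_iff.mpr hy0
      rw [map_smul, ← smul_sub, norm_smul, norm_inv, norm_norm]
      rw [inv_mul_lt_iff₀ hny]
      calc ‖y - Kc y‖ < 1 / (n+1) * ‖y‖ := hy
        _ = ‖y‖ * (1 / (n+1)) := by ring
  choose u hu1 hu2 using hex
  obtain ⟨M, hM, hMsub⟩ := hc.image_closedBall_subset_compact 1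
  have hmem : ∀ n, Kc (u n) ∈ M := fun n =>
    hMsub ⟨u n, by simp [Metric.mem_closedBall, hu1 n], rfl⟩
  obtain ⟨v, _, φ, hφ, hconv⟩ := hM.tendsto_subseq hmem
  have htend0 : Tendsto (fun n => u (φ n) - Kc (u (φ n))) atTop (𝓝 0) := by
    apply squeeze_zero_norm (fun n => le_of_lt (hu2 (φ n)))
    have : Tendsto (fun n : ℕ => 1 / ((n:ℝ) + 1)) atTop (𝓝 0) := tendsto_one_div_add_atTop_nhds_zero_nat
    exact this.comp (hφ.tendsto_atTop)
  have huconv : Tendsto (fun n => u (φ n)) atTop (𝓝 v) := by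
    have := htend0.add hconv
    simpa using this
  have hnv : ‖v‖ = 1 := by
    have h0 : Tendsto (fun n => ‖u (φ n)‖) atTop (𝓝 ‖v‖) :=
      (continuous_norm.tendsto v).comp huconv
    have h1 : Tendsto (fun n => ‖u (φ n)‖) atTop (𝓝 1) := by
      simpa [hu1] using tendsto_const_nhds (α := ℝ) (x := (1:ℝ))
    exact (tendsto_nhds_unique h0 h1)
  have hvz : v - Kc v = 0 := by
    have h2 : Tendsto (fun n => u (φ n) - Kc (u (φ n))) atTop (𝓝 (v - Kc v)) :=
      huconv.sub ((Kc.continuous.tendsto v).comp huconv)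
    exact tendsto_nhds_unique h2 htend0
  have : v = 0 := by
    have : (1 - Kc : Y →L[ℝ] Y) v = (1 - Kc : Y →L[ℝ] Y) 0 := by
      simp [ContinuousLinearMap.sub_apply, hvz]
    exact hinj this
  rw [this] at hnv; simp at hnv

lemma compact_inj_surj {Y : Type*} [NormedAddCommGroup Y] [NormedSpace ℝ Y] [CompleteSpace Y]
    (Kc : Y →L[ℝ] Y) (hc : IsCompactOperator ⇑Kc)
    (hinj : Function.Injective ⇑(1 - Kc : Y →L[ℝ] Y)) :
    Function.Surjective ⇑(1 - Kc : Y →L[ℝ] Y) := by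
  set T : Y →L[ℝ] Y := 1 - Kc with hT
  have hTapp : ∀ y, T y = y - Kc y := fun y => by
    simp [hT, ContinuousLinearMap.sub_apply]
  obtain ⟨c, hc0, hbd⟩ := compact_inj_bound Kc hc hinj
  have hbd' : ∀ y, c * ‖y‖ ≤ ‖T y‖ := fun y => by rw [hTapp]; exact hbd y
  have hbdn : ∀ (n : ℕ) (y : Y), c ^ n * ‖y‖ ≤ ‖(T ^ n) y‖ := by
    intro n
    induction n with
    | zero => intro y; simp
    | succ n ih =>
      intro y
      have h1 : (T ^ (n + 1)) y = (T ^ n) (T y) := by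
        rw [pow_succ, ContinuousLinearMap.mul_apply]
      rw [h1]
      calc c ^ (n+1) * ‖y‖ = c ^ n * (c * ‖y‖) := by ring
        _ ≤ c ^ n * ‖T y‖ :=
            mul_le_mul_of_nonneg_left (hbd' y) (pow_nonneg hc0.le n)
        _ ≤ ‖(T ^ n) (T y)‖ := ih (T y)
  have hanti : ∀ n : ℕ, AntilipschitzWith ((c ^ n)⁻¹).toNNReal ⇑(T ^ n) := by
    intro n
    apply ContinuousLinearMap.antilipschitz_of_bound
    intro y
    have hcp : (0:ℝ) < c ^ n := pow_pos hc0 n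
    rw [Real.coe_toNNReal _ (by positivity)]
    rw [le_inv_mul_iff₀ hcp]
    exact hbdn n y
  have hinjn : ∀ n, Function.Injective ⇑(T ^ n) := fun n => (hanti n).injective
  have hclosed : ∀ n, IsClosed (Set.range ⇑(T ^ n)) := fun n =>
    (hanti n).isClosed_range (T ^ n).uniformContinuous
  set Yn : ℕ → Submodule ℝ Y := fun n => LinearMap.range ((T ^ n : Y →L[ℝ] Y) : Y →ₗ[ℝ] Y) with hYn
  have hYnset : ∀ n, (Yn n : Set Y) = Set.range ⇑(T ^ n) := fun n => by
    exact LinearMap.coe_range ((T ^ n : Y →L[ℝ] Y) : Y →ₗ[ℝ] Y)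
  have hstep : ∀ n, Yn (n + 1) ≤ Yn n := by
    intro n x hx
    obtain ⟨u, hu⟩ := hx
    exact ⟨T u, by rw [← hu, pow_succ, ContinuousLinearMap.coe_coe, ContinuousLinearMap.coe_coe, ContinuousLinearMap.mul_apply]⟩
  have hmono : Antitone Yn := antitone_nat_of_succ_le hstep
  by_contra hcon
  obtain ⟨v, hv⟩ : ∃ v : Y, ∀ u, T u ≠ v := by
    by_contra h
    push_neg at h
    exact hcon fun b => h b
  have hnotin : ∀ n, (T ^ n) v ∉ Yn (n + 1) := by
    rintro n ⟨u, hu⟩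
    have h1 : (T ^ (n+1)) u = (T ^ n) (T u) := by
      rw [pow_succ, ContinuousLinearMap.mul_apply]
    rw [ContinuousLinearMap.coe_coe, h1] at hu
    exact hv u (hinjn n hu)
  have hriesz : ∀ n, ∃ x, x ∈ Yn n ∧ ‖x‖ = 1 ∧
      ∀ z ∈ Yn (n + 1), (1:ℝ)/2 < ‖x - z‖ := by
    intro n
    have hFc : IsClosed ((Yn (n+1) : Submodule ℝ Y) : Set Y) := by
      rw [hYnset]; exact hclosed (n+1)
    set x0 := (T ^ n) v with hx0def
    have hx0 : x0 ∈ Yn n := ⟨v, rfl⟩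
    have hx0F : x0 ∉ (Yn (n+1) : Set Y) := hnotin n
    have hFne : ((Yn (n+1) : Submodule ℝ Y) : Set Y).Nonempty := ⟨0, (Yn (n+1)).zero_mem⟩
    have hd : 0 < Metric.infDist x0 (Yn (n+1) : Set Y) :=
      (hFc.notMem_iff_infDist_pos hFne).mp hx0F
    set d := Metric.infDist x0 (Yn (n+1) : Set Y) with hddef
    obtain ⟨y', hy'F, hy'⟩ := (Metric.infDist_lt_iff hFne).mp
      (show d < 2 * d by linarith)
    set e := x0 - y' with hedef
    clear_value e
    have he : d ≤ ‖e‖ := by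
      have := Metric.infDist_le_dist_of_mem (x := x0) hy'F
      rw [dist_eq_norm] at this
      rwa [← hedef] at this
    have he0 : (0:ℝ) < ‖e‖ := lt_of_lt_of_le hd he
    have he2 : ‖e‖ < 2 * d := by
      rw [hedef, ← dist_eq_norm]; exact hy'
    refine ⟨‖e‖⁻¹ • e, ?_, ?_, ?_⟩
    · exact (Yn n).smul_mem _ (hedef ▸ (Yn n).sub_mem hx0 (hstep n hy'F))
    · rw [norm_smul, norm_inv, norm_norm, inv_mul_cancel₀ he0.ne']
    · intro z hz
      have h2 : y' + ‖e‖ • z ∈ (Yn (n+1) : Set Y) :=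
        (Yn (n+1)).add_mem hy'F ((Yn (n+1)).smul_mem _ hz)
      have h3 : d ≤ ‖x0 - (y' + ‖e‖ • z)‖ := by
        have := Metric.infDist_le_dist_of_mem (x := x0) h2
        rwa [dist_eq_norm] at this
      have h4 : e - ‖e‖ • z = x0 - (y' + ‖e‖ • z) := by
        rw [hedef]; abel
      have h5 : ‖e‖⁻¹ • e - z = ‖e‖⁻¹ • (e - ‖e‖ • z) := by
        rw [smul_sub, smul_smul, inv_mul_cancel₀ he0.ne', one_smul]
      calc (1:ℝ)/2 < d / ‖e‖ := by
            rw [lt_div_iff₀ he0]; linarith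
        _ ≤ ‖e‖⁻¹ * ‖e - ‖e‖ • z‖ := by
            rw [div_eq_inv_mul]
            exact mul_le_mul_of_nonneg_left (h4 ▸ h3) (by positivity)
        _ = ‖‖e‖⁻¹ • (e - ‖e‖ • z)‖ := by
            rw [norm_smul, norm_inv, norm_norm]
        _ = ‖‖e‖⁻¹ • e - z‖ := by rw [h5]
  choose xs hxs1 hxs2 hxs3 using hriesz
  have key : ∀ m n : ℕ, n < m → (1:ℝ)/2 < ‖Kc (xs n) - Kc (xs m)‖ := by
    intro m n hnm
    have hz : T (xs n) + xs m - T (xs m) ∈ Yn (n + 1) := by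
      have h1 : T (xs n) ∈ Yn (n+1) := by
        obtain ⟨u, hu⟩ := hxs1 n
        exact ⟨u, by rw [← hu, pow_succ', ContinuousLinearMap.coe_coe, ContinuousLinearMap.coe_coe, ContinuousLinearMap.mul_apply]⟩
      have h2 : xs m ∈ Yn (n+1) := hmono hnm (hxs1 m)
      have h3 : T (xs m) ∈ Yn (n+1) := by
        obtain ⟨u, hu⟩ := hxs1 m
        have : T (xs m) ∈ Yn (m+1) :=
          ⟨u, by rw [← hu, pow_succ', ContinuousLinearMap.coe_coe, ContinuousLinearMap.coe_coe, ContinuousLinearMap.mul_apply]⟩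
        exact hmono (by omega : n + 1 ≤ m + 1) this
      exact (Yn (n+1)).sub_mem ((Yn (n+1)).add_mem h1 h2) h3
    have heq : Kc (xs n) - Kc (xs m) = xs n - (T (xs n) + xs m - T (xs m)) := by
      rw [hTapp, hTapp]; abel
    rw [heq]
    exact hxs3 n _ hz
  obtain ⟨M, hM, hMsub⟩ := hc.image_closedBall_subset_compact 1
  have hmemM : ∀ n, Kc (xs n) ∈ M := fun n =>
    hMsub ⟨xs n, by simp [Metric.mem_closedBall, hxs2 n], rfl⟩
  obtain ⟨w, _, φ, hφ, hcv⟩ := hM.tendsto_subseq hmemM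
  have hcs : CauchySeq (fun n => Kc (xs (φ n))) := hcv.cauchySeq
  obtain ⟨N, hN⟩ := Metric.cauchySeq_iff.mp hcs (1/2) (by norm_num)
  have h1 := hN N le_rfl (N + 1) (by omega)
  have h2 := key (φ (N + 1)) (φ N) (hφ (by omega))
  rw [dist_eq_norm] at h1
  linarith

lemma rankOne_compact {Y : Type*} [NormedAddCommGroup Y] [NormedSpace ℝ Y]
    (f : Y →L[ℝ] ℝ) (B : Y) : IsCompactOperator ⇑(f.smulRight B) := by
  refine ⟨(fun t : ℝ => t • B) '' Set.Icc (-1) 1,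
    (isCompact_Icc.image (by fun_prop)), ?_⟩
  have h1 : f ⁻¹' Set.Icc (-1) 1 ∈ (𝓝 (0:Y)) := by
    apply f.continuous.continuousAt.preimage_mem_nhds
    rw [map_zero]
    exact Icc_mem_nhds (by norm_num) (by norm_num)
  apply Filter.mem_of_superset h1
  intro y hy
  exact ⟨f y, hy, rfl⟩

lemma fredholm_solve {Y : Type*} [NormedAddCommGroup Y] [NormedSpace ℝ Y] [CompleteSpace Y]
    (Q : Y →L[ℝ] Y) (hc : IsCompactOperator ⇑Q) (B : Y) (hB : B ≠ 0)
    (hker : LinearMap.ker ((ContinuousLinearMap.id ℝ Y - Q : Y →L[ℝ] Y) : Y →ₗ[ℝ] Y) = Submodule.span ℝ {B})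
    (hrange : B ∉ LinearMap.range ((ContinuousLinearMap.id ℝ Y - Q : Y →L[ℝ] Y) : Y →ₗ[ℝ] Y)) :
    ∀ v : Y, ∃ ζ : ℝ, ∃ y : Y, y - Q y = ζ • B + v := by
  have hIQ : ∀ y : Y, ((ContinuousLinearMap.id ℝ Y - Q : Y →L[ℝ] Y) : Y →ₗ[ℝ] Y) y = y - Q y := fun y => by
    simp [ContinuousLinearMap.sub_apply]
  obtain ⟨f, hf1, hfB⟩ := exists_dual_vector ℝ B (norm_ne_zero_iff.mpr hB)
  set Q' : Y →L[ℝ] Y := Q + f.smulRight B with hQ'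
  have hQ'app : ∀ y, Q' y = Q y + f y • B := fun y => rfl
  have hc' : IsCompactOperator ⇑Q' := by
    have := hc.add (rankOne_compact f B)
    exact this
  have hinj : Function.Injective ⇑(1 - Q' : Y →L[ℝ] Y) := by
    have hz : ∀ y : Y, (1 - Q' : Y →L[ℝ] Y) y = 0 → y = 0 := by
      intro y hy
      have h1 : y - Q y - f y • B = 0 := by
        rw [ContinuousLinearMap.sub_apply, ContinuousLinearMap.one_apply, hQ'app] at hy
        rw [← hy]; abel
      have h2 : y - Q y = f y • B := by
        rw [sub_eq_zero] at h1; exact h1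
      have hfy : f y = 0 := by
        by_contra hfy
        apply hrange
        refine ⟨(f y)⁻¹ • y, ?_⟩
        rw [map_smul, hIQ, h2, smul_smul, inv_mul_cancel₀ hfy, one_smul]
      have h3 : y ∈ LinearMap.ker ((ContinuousLinearMap.id ℝ Y - Q : Y →L[ℝ] Y) : Y →ₗ[ℝ] Y) := by
        rw [LinearMap.mem_ker, hIQ, h2, hfy, zero_smul]
      rw [hker, Submodule.mem_span_singleton] at h3
      obtain ⟨a, ha⟩ := h3
      have : f y = a * ‖B‖ := by rw [← ha, map_smul, hfB]; rfl
      have hBn : ‖B‖ ≠ 0 := norm_ne_zero_iff.mpr hB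
      have ha0 : a = 0 := by
        rw [hfy] at this
        rcases mul_eq_zero.mp this.symm with h | h
        · exact h
        · exact absurd h hBn
      rw [← ha, ha0, zero_smul]
    intro a b hab
    have : (1 - Q' : Y →L[ℝ] Y) (a - b) = 0 := by
      rw [map_sub, hab, sub_self]
    have := hz _ this
    exact sub_eq_zero.mp this
  have hsurj := compact_inj_surj Q' hc' hinj
  intro v
  obtain ⟨y, hy⟩ := hsurj v
  refine ⟨f y, y, ?_⟩
  rw [ContinuousLinearMap.sub_apply, ContinuousLinearMap.one_apply, hQ'app] at hy
  have : y - Q y - f y • B = v := by rw [← hy]; abel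
  rw [← this]; abel

/-- For every pair `(g, h) ∈ Y × Z` there exists a unique pair
`(ζ, w) ∈ ℝ × X` with `P_k w = 0` and `L w = (ζ B + g, −h)`. -/
theorem stmt_8
    {X Y Z : Type*}
    [NormedAddCommGroup X] [NormedSpace ℝ X] [CompleteSpace X]
    [NormedAddCommGroup Y] [NormedSpace ℝ Y] [CompleteSpace Y]
    [NormedAddCommGroup Z] [NormedSpace ℝ Z] [CompleteSpace Z]
    (T : X ≃L[ℝ] Y × Z)
    (P : Y →L[ℝ] X) (K : Z →L[ℝ] X)
    (hP : ∀ y : Y, P y = T.symm (y, 0))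
    (hK : ∀ z : Z, K z = T.symm (0, z))
    (ℓ₀ : X →L[ℝ] Y)
    (Q₀ : Y →L[ℝ] Y) (hQ₀ : ∀ y : Y, Q₀ y = ℓ₀ (P y))
    (L : X →L[ℝ] Y × Z)
    (hL : ∀ u : X, L u = ((T u).1 - ℓ₀ u, (T u).2))
    (hcomp : IsCompactOperator ⇑Q₀)
    (B : Y) (hB : B ≠ 0)
    (hBker : LinearMap.ker ((ContinuousLinearMap.id ℝ Y - Q₀ : Y →L[ℝ] Y) : Y →ₗ[ℝ] Y) = Submodule.span ℝ {B})
    (hBrange : B ∉ LinearMap.range ((ContinuousLinearMap.id ℝ Y - Q₀ : Y →L[ℝ] Y) : Y →ₗ[ℝ] Y))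
    (P_k : X →L[ℝ] X)
    (hPkidem : ∀ x : X, P_k (P_k x) = P_k x)
    (hPkrange : LinearMap.range (P_k : X →ₗ[ℝ] X) = LinearMap.ker (L : X →ₗ[ℝ] Y × Z))
    (hkerL : (LinearMap.ker (L : X →ₗ[ℝ] Y × Z) : Submodule ℝ X) = Submodule.span ℝ {P B}) :
    ∀ (g : Y) (h : Z),
      ∃! p : ℝ × X, P_k p.2 = 0 ∧ L p.2 = (p.1 • B + g, -h) := by
  intro g h
  have hIQ : ∀ y : Y, ((ContinuousLinearMap.id ℝ Y - Q₀ : Y →L[ℝ] Y) : Y →ₗ[ℝ] Y) y = y - Q₀ y := fun y => by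
    simp [ContinuousLinearMap.sub_apply]
  have hfix : ∀ x : X, x ∈ LinearMap.ker (L : X →ₗ[ℝ] Y × Z) → P_k x = x := by
    intro x hx
    rw [← hPkrange] at hx
    obtain ⟨u, hu⟩ := hx
    rw [← hu, ContinuousLinearMap.coe_coe, hPkidem]
  have hPBker : P B ∈ LinearMap.ker (L : X →ₗ[ℝ] Y × Z) := by
    rw [hkerL]; exact Submodule.mem_span_singleton_self _
  have hLPB : L (P B) = 0 := LinearMap.mem_ker.mp hPBker
  obtain ⟨ζ, y, hy⟩ := fredholm_solve Q₀ hcomp B hB hBker hBrange (g - ℓ₀ (K h))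
  set w₀ : X := P y - K h with hw₀
  have hTw₀ : T w₀ = (y, -h) := by
    have h1 : w₀ = T.symm (y, -h) := by
      rw [hw₀, hP, hK, ← map_sub]
      congr 1
      ext <;> simp
    rw [h1, T.apply_symm_apply]
  have hLw₀ : L w₀ = (ζ • B + g, -h) := by
    have h1 := hL w₀
    rw [hTw₀] at h1
    rw [h1]
    have h2 : ℓ₀ w₀ = Q₀ y - ℓ₀ (K h) := by
      rw [hw₀, map_sub, ← hQ₀]
    have h3 : y - ℓ₀ w₀ = ζ • B + g := by
      rw [h2]
      have h5 : y - Q₀ y = ζ • B + (g - ℓ₀ (K h)) := hy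
      have h4 : y - (Q₀ y - ℓ₀ (K h)) = (y - Q₀ y) + ℓ₀ (K h) := by abel
      rw [h4, h5]; abel
    rw [h3]
  obtain ⟨s, hs⟩ : ∃ s : ℝ, s • P B = P_k w₀ := by
    have h1 : P_k w₀ ∈ LinearMap.range (P_k : X →ₗ[ℝ] X) := ⟨w₀, rfl⟩
    rw [hPkrange, hkerL] at h1
    exact Submodule.mem_span_singleton.mp h1
  set w : X := w₀ - s • P B with hw
  have cond1 : P_k w = 0 := by
    rw [hw, map_sub, map_smul, ← hs, hfix (P B) hPBker, sub_self]
  have cond2 : L w = (ζ • B + g, -h) := by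
    rw [hw, map_sub, map_smul, hLPB, smul_zero, sub_zero, hLw₀]
  refine ⟨(ζ, w), ⟨cond1, cond2⟩, ?_⟩
  rintro ⟨ζ', w'⟩ ⟨hq1, hq2⟩
  set d : X := w' - w with hd
  have hLd : L d = ((ζ' - ζ) • B, 0) := by
    rw [hd, map_sub, hq2, cond2, Prod.mk_sub_mk]
    congr 1
    · rw [sub_smul]; abel
    · abel
  have heq := (hL d).symm.trans hLd
  rw [Prod.mk.injEq] at heq
  obtain ⟨h1, h2⟩ := heq
  have hdP : d = P ((T d).1) := by
    rw [hP]
    have h3 : ((T d).1, (0 : Z)) = T d := by rw [← h2]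
    rw [h3, T.symm_apply_apply]
  have h4 : (T d).1 - Q₀ ((T d).1) = (ζ' - ζ) • B := by
    rw [← h1, hQ₀, ← hdP]
  have hζ : ζ' - ζ = 0 := by
    by_contra hne
    apply hBrange
    refine ⟨(ζ' - ζ)⁻¹ • (T d).1, ?_⟩
    rw [map_smul, hIQ, h4, smul_smul, inv_mul_cancel₀ hne, one_smul]
  have h5 : (T d).1 ∈ LinearMap.ker ((ContinuousLinearMap.id ℝ Y - Q₀ : Y →L[ℝ] Y) : Y →ₗ[ℝ] Y) := by
    rw [LinearMap.mem_ker, hIQ, h4, hζ, zero_smul]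
  rw [hBker, Submodule.mem_span_singleton] at h5
  obtain ⟨a, ha⟩ := h5
  have hdker : d ∈ LinearMap.ker (L : X →ₗ[ℝ] Y × Z) := by
    rw [hkerL, Submodule.mem_span_singleton]
    exact ⟨a, by rw [← map_smul, ha, ← hdP]⟩
  have hPkd : P_k d = 0 := by
    rw [hd, map_sub, hq1, cond1, sub_zero]
  have hd0 : d = 0 := by rw [← hfix d hdker, hPkd]
  have hw' : w' = w := sub_eq_zero.mp hd0
  have hζ' : ζ' = ζ := sub_eq_zero.mp hζ
  rw [Prod.mk.injEq]
  exact ⟨hζ', hw'⟩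
end

section
/- (Proposition 2.4 of the paper, abstract form.) Suppose λ : (−ε₀, ε₀) → ℝ and z : (−ε₀, ε₀) → X are twice continuously differentiable with λ(0) = 0, z(0) = 0 and P_k z(ε) = 0 for all ε, and suppose that for every |ε| < ε₀ the element u(ε) := ε (P B + z(ε)) lies in Σ and solves (T u(ε))₂ + F(u(ε)) u(ε) = 0 and (T u(ε))₁ = (1 + λ(ε)) ( ℓ₀(u(ε)) + ℓ_*(u(ε)) ). Then λ′(0) = ζ and z′(0) = P ξ − K h, where ξ ∈ Y is the unique element satisfying (I − Q₀) ξ = ζ B + g − ℓ₀(K h) and 𝓀(P ξ) = 𝓀(K h). Consequently, as ε → 0, n(ε) := 1 + λ(ε) = 1 + ζ ε + o(ε) and u(ε) = ε P B + ε² (P ξ − K h) + o(ε²) in X. -/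
open Asymptotics Filter

lemma clm_apply_oO {X Z : Type*} [NormedAddCommGroup X] [NormedSpace ℝ X]
    [NormedAddCommGroup Z] [NormedSpace ℝ Z]
    {r : ℝ → X →L[ℝ] Z} {v : ℝ → X} {l : Filter ℝ}
    (hr : r =o[l] fun t => t) (hv : v =O[l] fun t => t) :
    (fun t => r t (v t)) =o[l] fun t => t ^ 2 := by
  have h1 : (fun t => r t (v t)) =O[l] fun t => ‖r t‖ * ‖v t‖ :=
    isBigO_of_le l fun t => by
      rw [Real.norm_eq_abs, abs_mul, abs_norm, abs_norm]
      exact (r t).le_opNorm (v t)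
  have h2 : (fun t => ‖r t‖ * ‖v t‖) =o[l] fun t => t * t :=
    hr.norm_left.mul_isBigO hv.norm_left
  have h3 := h1.trans_isLittleO h2
  simpa [pow_two] using h3

lemma clm_apply_Oo {X Z : Type*} [NormedAddCommGroup X] [NormedSpace ℝ X]
    [NormedAddCommGroup Z] [NormedSpace ℝ Z]
    {r : ℝ → X →L[ℝ] Z} {v : ℝ → X} {l : Filter ℝ}
    (hr : r =O[l] fun t => t) (hv : v =o[l] fun t => t) :
    (fun t => r t (v t)) =o[l] fun t => t ^ 2 := by
  have h1 : (fun t => r t (v t)) =O[l] fun t => ‖r t‖ * ‖v t‖ :=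
    isBigO_of_le l fun t => by
      rw [Real.norm_eq_abs, abs_mul, abs_norm, abs_norm]
      exact (r t).le_opNorm (v t)
  have h2 : (fun t => ‖r t‖ * ‖v t‖) =o[l] fun t => t * t :=
    hr.norm_left.mul_isLittleO hv.norm_left
  have h3 := h1.trans_isLittleO h2
  simpa [pow_two] using h3

lemma eq_zero_of_sq_smul_isLittleO {E : Type*} [NormedAddCommGroup E] [NormedSpace ℝ E] {c : E}
    (hlo : (fun t : ℝ => t ^ 2 • c) =o[nhds (0:ℝ)] fun t => t ^ 2) : c = 0 := by
  by_contra hc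
  have hpos : 0 < ‖c‖ := norm_pos_iff.mpr hc
  have h2 := hlo.def (half_pos hpos)
  have h3 : ∀ᶠ t in nhdsWithin (0:ℝ) {(0:ℝ)}ᶜ, ‖t ^ 2 • c‖ ≤ ‖c‖ / 2 * ‖t ^ 2‖ :=
    h2.filter_mono nhdsWithin_le_nhds
  obtain ⟨t, ht1, ht2⟩ := (h3.and eventually_mem_nhdsWithin).exists
  have ht0 : t ≠ 0 := ht2
  have htsq : 0 < t ^ 2 := by positivity
  have e1 : ‖t ^ 2 • c‖ = t ^ 2 * ‖c‖ := by
    rw [norm_smul, Real.norm_eq_abs, abs_of_nonneg (sq_nonneg t)]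
  have e2 : ‖t ^ 2‖ = t ^ 2 := by
    rw [Real.norm_eq_abs, abs_of_nonneg (sq_nonneg t)]
  rw [e1, e2] at ht1
  nlinarith

lemma taylor2_aux {E : Type*} [NormedAddCommGroup E] [NormedSpace ℝ E]
    {f f' : ℝ → E} {c : E}
    (hf : ∀ᶠ t in nhds (0:ℝ), HasDerivAt f (f' t) t)
    (hf' : HasDerivAt f' c 0) :
    (fun t => f t - f 0 - t • f' 0 - (t ^ 2 / 2) • c) =o[nhds (0:ℝ)] fun t => t ^ 2 := by
  set ψ : ℝ → E := fun t => f t - f 0 - t • f' 0 - (t ^ 2 / 2) • c with hψdef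
  set ψ' : ℝ → E := fun t => f' t - f' 0 - t • c with hψ'def
  have hψd : ∀ t, HasDerivAt f (f' t) t → HasDerivAt ψ (ψ' t) t := by
    intro t ht
    have h1 : HasDerivAt (fun s : ℝ => s • f' 0) ((1:ℝ) • f' 0) t :=
      (hasDerivAt_id t).smul_const (f' 0)
    have h2 : HasDerivAt (fun s : ℝ => (s ^ 2 / 2) • c) ((2 * t ^ 1 / 2) • c) t :=
      ((hasDerivAt_pow 2 t).div_const 2).smul_const c
    have h3 : (2 * t ^ 1 / 2 : ℝ) = t := by ring
    rw [h3] at h2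
    have h4 := ((ht.sub_const (f 0)).sub h1).sub h2
    rw [one_smul] at h4
    exact h4
  have hψ'o : ψ' =o[nhds (0:ℝ)] fun t => t := by
    have := hasDerivAt_iff_isLittleO.mp hf'
    simp only [sub_zero] at this
    exact this
  rw [Asymptotics.isLittleO_iff]
  intro δ hδ
  have hev : ∀ᶠ t in nhds (0:ℝ), HasDerivAt f (f' t) t ∧ ‖ψ' t‖ ≤ δ * ‖t‖ :=
    hf.and (hψ'o.def hδ)
  obtain ⟨r, hr, hrs⟩ := Metric.eventually_nhds_iff_ball.mp hev
  filter_upwards [Metric.ball_mem_nhds (0:ℝ) hr] with t ht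
  have hsub : Set.uIcc 0 t ⊆ Metric.ball (0:ℝ) r :=
    (convex_ball (0:ℝ) r).ordConnected.uIcc_subset (Metric.mem_ball_self hr) ht
  have habs : ∀ s ∈ Set.uIcc (0:ℝ) t, |s| ≤ |t| := by
    intro s hs
    rcases Set.mem_uIcc.mp hs with ⟨h1, h2⟩ | ⟨h1, h2⟩
    · simpa using abs_le_max_abs_abs h1 h2
    · simpa using abs_le_max_abs_abs h1 h2
  have hD : ∀ s ∈ Set.uIcc (0:ℝ) t, HasDerivWithinAt ψ (ψ' s) (Set.uIcc 0 t) s :=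
    fun s hs => (hψd s (hrs s (hsub hs)).1).hasDerivWithinAt
  have hbound : ∀ s ∈ Set.uIcc (0:ℝ) t, ‖ψ' s‖ ≤ δ * |t| := by
    intro s hs
    refine ((hrs s (hsub hs)).2).trans ?_
    rw [Real.norm_eq_abs]
    exact mul_le_mul_of_nonneg_left (habs s hs) hδ.le
  have key := Convex.norm_image_sub_le_of_norm_hasDerivWithin_le hD hbound
    (convex_uIcc 0 t) (Set.left_mem_uIcc) (Set.right_mem_uIcc)
  have hψ0 : ψ 0 = 0 := by simp [hψdef]
  rw [hψ0, sub_zero, sub_zero] at key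
  calc ‖ψ t‖ ≤ δ * |t| * ‖t‖ := key
    _ = δ * ‖t ^ 2‖ := by
        rw [Real.norm_eq_abs, Real.norm_eq_abs, abs_pow]
        ring

lemma isBigO_smul_const {E : Type*} [NormedAddCommGroup E] [NormedSpace ℝ E]
    (f : ℝ → ℝ) (v : E) (l : Filter ℝ) :
    (fun t => f t • v) =O[l] f := by
  rw [Asymptotics.isBigO_iff]
  exact ⟨‖v‖, Filter.Eventually.of_forall fun t =>
    le_of_eq (by rw [norm_smul, mul_comm])⟩
set_option maxHeartbeats 1000000

/-- Proposition 2.4, abstract form: if `λ, z` are `C²` on `(−ε₀, ε₀)` with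
`λ 0 = 0`, `z 0 = 0`, `P_k (z ε) = 0`, and `u(ε) := ε (P B + z ε)` lies in `Σ` and solves
`(T u)₂ + F(u) u = 0`, `(T u)₁ = (1 + λ(ε)) (ℓ₀(u) + ℓ_*(u))`, then `λ′(0) = ζ` and
`z′(0) = P ξ − K h`, where `ξ` is the unique element of `Y` with
`(I − Q₀) ξ = ζ B + g − ℓ₀ (K h)` and `𝓀 (P ξ) = 𝓀 (K h)`; consequently
`n(ε) = 1 + ζ ε + o(ε)` and `u(ε) = ε P B + ε² (P ξ − K h) + o(ε²)` as `ε → 0`.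
Here `h := (DF(0)[P B])(P B)`, `g := ½ D²ℓ_*(0)[P B, P B]`, and `ζ` is determined by
`(I − P_M)(ℓ₀(K h) − g) = ζ B`. -/
theorem stmt_10
    {X Y Z : Type*}
    [NormedAddCommGroup X] [NormedSpace ℝ X] [CompleteSpace X]
    [NormedAddCommGroup Y] [NormedSpace ℝ Y] [CompleteSpace Y]
    [NormedAddCommGroup Z] [NormedSpace ℝ Z] [CompleteSpace Z]
    (T : X ≃L[ℝ] Y × Z)
    (P : Y →L[ℝ] X) (K : Z →L[ℝ] X)
    (hP : ∀ y : Y, P y = T.symm (y, 0))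
    (hK : ∀ z : Z, K z = T.symm (0, z))
    (ℓ₀ : X →L[ℝ] Y)
    (Q₀ : Y →L[ℝ] Y) (hQ₀ : ∀ y : Y, Q₀ y = ℓ₀ (P y))
    (L : X →L[ℝ] Y × Z)
    (hL : ∀ u : X, L u = ((T u).1 - ℓ₀ u, (T u).2))
    (hcomp : IsCompactOperator ⇑Q₀)
    (B : Y) (hB : B ≠ 0)
    (hBker : LinearMap.ker ((ContinuousLinearMap.id ℝ Y - Q₀ : Y →L[ℝ] Y) : Y →ₗ[ℝ] Y) = Submodule.span ℝ {B})
    (hBrange : B ∉ LinearMap.range ((ContinuousLinearMap.id ℝ Y - Q₀ : Y →L[ℝ] Y) : Y →ₗ[ℝ] Y))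
    (P_M : Y →L[ℝ] Y)
    (hPMidem : ∀ y : Y, P_M (P_M y) = P_M y)
    (hPMrange : LinearMap.range (P_M : Y →ₗ[ℝ] Y) =
      LinearMap.range ((ContinuousLinearMap.id ℝ Y - Q₀ : Y →L[ℝ] Y) : Y →ₗ[ℝ] Y))
    (hPMB : P_M B = 0)
    (P_k : X →L[ℝ] X) (k : X →L[ℝ] ℝ)
    (hPk : ∀ x : X, P_k x = k x • P B)
    (hPkrange : LinearMap.range (P_k : X →ₗ[ℝ] X) = LinearMap.ker (L : X →ₗ[ℝ] Y × Z))
    (hkerL : (LinearMap.ker (L : X →ₗ[ℝ] Y × Z) : Submodule ℝ X) = Submodule.span ℝ {P B})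
    (hkPB : k (P B) = 1)
    (R₀ : ℝ) (hR₀ : 0 < R₀)
    (F : X → X →L[ℝ] Z)
    (hF : ContDiffOn ℝ 1 F (Metric.ball (0 : X) R₀))
    (hF0 : F 0 = 0)
    (ℓs : X → Y)
    (hℓs : ContDiffOn ℝ 2 ℓs (Metric.ball (0 : X) R₀))
    (hℓs0 : ℓs 0 = 0)
    (hDℓs0 : fderiv ℝ ℓs 0 = 0)
    (h : Z) (hh : h = fderiv ℝ F 0 (P B) (P B))
    (g : Y) (hg : g = (1 / 2 : ℝ) • fderiv ℝ (fun x => fderiv ℝ ℓs x) 0 (P B) (P B))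
    (ζ : ℝ)
    (hζ : ℓ₀ (K h) - g - P_M (ℓ₀ (K h) - g) = ζ • B)
    (ε₀ : ℝ) (hε₀ : 0 < ε₀)
    (lam : ℝ → ℝ) (z : ℝ → X)
    (hlam : ContDiffOn ℝ 2 lam (Set.Ioo (-ε₀) ε₀))
    (hz : ContDiffOn ℝ 2 z (Set.Ioo (-ε₀) ε₀))
    (hlam0 : lam 0 = 0) (hz0 : z 0 = 0)
    (hPkz : ∀ ε ∈ Set.Ioo (-ε₀) ε₀, P_k (z ε) = 0)
    (hmem : ∀ ε ∈ Set.Ioo (-ε₀) ε₀, ε • (P B + z ε) ∈ Metric.ball (0 : X) R₀)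
    (hsol₂ : ∀ ε ∈ Set.Ioo (-ε₀) ε₀,
      (T (ε • (P B + z ε))).2 + F (ε • (P B + z ε)) (ε • (P B + z ε)) = 0)
    (hsol₁ : ∀ ε ∈ Set.Ioo (-ε₀) ε₀,
      (T (ε • (P B + z ε))).1 =
        (1 + lam ε) • (ℓ₀ (ε • (P B + z ε)) + ℓs (ε • (P B + z ε)))) :
    (∃! ξ : Y, (ξ - Q₀ ξ = ζ • B + g - ℓ₀ (K h) ∧ k (P ξ) = k (K h))) ∧
    ∀ ξ : Y, (ξ - Q₀ ξ = ζ • B + g - ℓ₀ (K h) ∧ k (P ξ) = k (K h)) →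
      deriv lam 0 = ζ ∧
      deriv z 0 = P ξ - K h ∧
      (fun ε : ℝ => lam ε - ζ * ε) =o[nhdsWithin 0 (Set.Ioo (-ε₀) ε₀)]
        (fun ε : ℝ => ε) ∧
      (fun ε : ℝ => ε • (P B + z ε) - ε • P B - (ε ^ 2) • (P ξ - K h))
        =o[nhdsWithin 0 (Set.Ioo (-ε₀) ε₀)] (fun ε : ℝ => ε ^ 2) := by
  have hIopen : IsOpen (Set.Ioo (-ε₀) ε₀) := isOpen_Ioo
  have h0I : (0:ℝ) ∈ Set.Ioo (-ε₀) ε₀ := ⟨by linarith, hε₀⟩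
  have hInhds : Set.Ioo (-ε₀) ε₀ ∈ nhds (0:ℝ) := hIopen.mem_nhds h0I
  set a := deriv z 0 with ha_def
  set μ := deriv lam 0 with hμ_def
  -- basic structural facts
  have hTP : ∀ y : Y, T (P y) = (y, 0) := fun y => by rw [hP]; exact T.apply_symm_apply _
  have hsymmPK : ∀ (y : Y) (w : Z), T.symm (y, w) = P y + K w := by
    intro y w
    rw [hP, hK, ← map_add]
    norm_num
  have hQB : Q₀ B = B := by
    have hBm : B ∈ LinearMap.ker ((ContinuousLinearMap.id ℝ Y - Q₀ : Y →L[ℝ] Y) : Y →ₗ[ℝ] Y) := by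
      rw [hBker]; exact Submodule.mem_span_singleton_self B
    have h1 := LinearMap.mem_ker.mp hBm
    have h2 : B - Q₀ B = 0 := by
      simpa [ContinuousLinearMap.sub_apply] using h1
    exact (sub_eq_zero.mp h2).symm
  have hℓPB : ℓ₀ (P B) = B := by rw [← hQ₀]; exact hQB
  have hPBne : P B ≠ 0 := by
    intro h0
    apply hB
    have h1 := hTP B
    rw [h0, map_zero] at h1
    simpa [Prod.ext_iff, eq_comm] using h1
  -- derivatives of z and lam at 0
  have hzd : HasDerivAt z a 0 :=
    ((hz.contDiffAt hInhds).differentiableAt (by norm_num)).hasDerivAt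
  have hlamd : HasDerivAt lam μ 0 :=
    ((hlam.contDiffAt hInhds).differentiableAt (by norm_num)).hasDerivAt
  have hz1 : (fun t => z t - t • a) =o[nhds (0:ℝ)] fun t => t := by
    have h1 := hasDerivAt_iff_isLittleO.mp hzd
    simpa [hz0] using h1
  have hlam1 : (fun t => lam t - t * μ) =o[nhds (0:ℝ)] fun t => t := by
    have h1 := hasDerivAt_iff_isLittleO.mp hlamd
    simpa [hlam0, smul_eq_mul] using h1
  have hztend : Filter.Tendsto z (nhds 0) (nhds (0:X)) := by
    have h1 := (hz.contDiffAt hInhds).continuousAt.tendsto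
    rwa [hz0] at h1
  have hzo1 : z =o[nhds (0:ℝ)] fun _ => (1:ℝ) := (Asymptotics.isLittleO_one_iff ℝ).mpr hztend
  have hidO : (fun t : ℝ => t) =O[nhds (0:ℝ)] (fun t : ℝ => t) := isBigO_refl _ _
  have hPBz_tend : Filter.Tendsto (fun t => P B + z t) (nhds (0:ℝ)) (nhds (P B + 0)) :=
    tendsto_const_nhds.add hztend
  have huO : (fun t : ℝ => t • (P B + z t)) =O[nhds (0:ℝ)] fun t => t := by
    have h1 : (fun t : ℝ => P B + z t) =O[nhds (0:ℝ)] (fun _ => (1:ℝ)) :=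
      hPBz_tend.isBigO_one ℝ
    have h2 := hidO.smul h1
    simpa using h2
  have hutend : Filter.Tendsto (fun t : ℝ => t • (P B + z t)) (nhds 0) (nhds (0:X)) :=
    huO.trans_tendsto tendsto_id
  have hu1 : (fun t : ℝ => t • (P B + z t) - t • P B) =o[nhds (0:ℝ)] fun t => t := by
    have h1 := hidO.smul_isLittleO hzo1
    refine h1.congr' (.of_forall fun t => ?_) (.of_forall fun t => ?_)
    · module
    · simp
  have hu2 : (fun t : ℝ => t • (P B + z t) - t • P B - t ^ 2 • a) =o[nhds (0:ℝ)] fun t => t ^ 2 := by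
    have h1 := hidO.smul_isLittleO hz1
    refine h1.congr' (.of_forall fun t => ?_) (.of_forall fun t => ?_)
    · module
    · show (t:ℝ) • t = t ^ 2
      rw [smul_eq_mul, pow_two]
  -- derivative of u at points of I
  have hder_u : ∀ t ∈ Set.Ioo (-ε₀) ε₀,
      HasDerivAt (fun s : ℝ => s • (P B + z s)) ((P B + z t) + t • deriv z t) t := by
    intro t ht
    have hzt : HasDerivAt z (deriv z t) t :=
      ((hz.contDiffAt (hIopen.mem_nhds ht)).differentiableAt (by norm_num)).hasDerivAt
    have h1 : HasDerivAt (fun s : ℝ => P B + z s) (deriv z t) t := hzt.const_add (P B)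
    have h2 := (hasDerivAt_id' t).smul h1
    have h3 : t • deriv z t + (1:ℝ) • (P B + z t) = (P B + z t) + t • deriv z t := by
      rw [one_smul]; abel
    rw [h3] at h2
    exact h2
  have hu0 : HasDerivAt (fun s : ℝ => s • (P B + z s)) (P B) 0 := by
    have h1 := hder_u 0 h0I
    rw [hz0] at h1
    simpa using h1
  -- ℓs piece: second-order Taylor expansion along the path
  set φ' : ℝ → Y := fun t =>
    fderiv ℝ ℓs (t • (P B + z t)) ((P B + z t) + t • deriv z t) with hφ'def
  have hf1c : ContDiffOn ℝ 1 (fderiv ℝ ℓs) (Metric.ball (0:X) R₀) :=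
    hℓs.fderiv_of_isOpen Metric.isOpen_ball (by norm_num)
  have hf1d : DifferentiableAt ℝ (fderiv ℝ ℓs) 0 :=
    (hf1c.differentiableOn (by norm_num)).differentiableAt
      (Metric.isOpen_ball.mem_nhds (Metric.mem_ball_self hR₀))
  have hA : HasDerivAt (fun t : ℝ => fderiv ℝ ℓs (t • (P B + z t)))
      (fderiv ℝ (fderiv ℝ ℓs) 0 (P B)) 0 := by
    have h1 : HasFDerivAt (fderiv ℝ ℓs) (fderiv ℝ (fderiv ℝ ℓs) 0) ((0:ℝ) • (P B + z 0)) := by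
      rw [zero_smul]
      exact hf1d.hasFDerivAt
    have h2 := h1.comp_hasDerivAt 0 hu0
    simpa [Function.comp_def] using h2
  have hdzc : ContDiffOn ℝ 1 (deriv z) (Set.Ioo (-ε₀) ε₀) :=
    hz.deriv_of_isOpen hIopen (by norm_num)
  have hdzz : HasDerivAt (deriv z) (deriv (deriv z) 0) 0 :=
    ((hdzc.contDiffAt hInhds).differentiableAt (by norm_num)).hasDerivAt
  have hv : HasDerivAt (fun t : ℝ => (P B + z t) + t • deriv z t)
      (a + ((0:ℝ) • deriv (deriv z) 0 + (1:ℝ) • deriv z 0)) 0 := by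
    have h1 : HasDerivAt (fun t : ℝ => P B + z t) a 0 := hzd.const_add (P B)
    exact h1.add ((hasDerivAt_id' (0:ℝ)).smul hdzz)
  have hg' : g = (1 / 2 : ℝ) • fderiv ℝ (fderiv ℝ ℓs) 0 (P B) (P B) := hg
  have hgval : fderiv ℝ (fderiv ℝ ℓs) 0 (P B) (P B) = (2:ℝ) • g := by
    rw [hg', smul_smul]; norm_num
  have hφ'0 : HasDerivAt φ' ((2:ℝ) • g) 0 := by
    have h8 := hA.clm_apply hv
    rw [hφ'def]
    convert h8 using 1
    rw [hz0]
    simp [hDℓs0, hgval]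
  have hφev : ∀ᶠ t in nhds (0:ℝ), HasDerivAt (fun s : ℝ => ℓs (s • (P B + z s))) (φ' t) t := by
    filter_upwards [hInhds] with t ht
    have hd := hder_u t ht
    have hℓd : HasFDerivAt ℓs (fderiv ℝ ℓs (t • (P B + z t))) (t • (P B + z t)) :=
      ((hℓs.differentiableOn (by norm_num)).differentiableAt
        (Metric.isOpen_ball.mem_nhds (hmem t ht))).hasFDerivAt
    have h1 := hℓd.comp_hasDerivAt t hd
    simpa [Function.comp_def, hφ'def] using h1
  have htay := taylor2_aux hφev hφ'0
  have hφ'00 : φ' 0 = 0 := by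
    rw [hφ'def]
    simp [hDℓs0]
  have hD : (fun t : ℝ => ℓs (t • (P B + z t)) - t ^ 2 • g) =o[nhds (0:ℝ)] fun t => t ^ 2 := by
    refine htay.congr' (.of_forall fun t => ?_) EventuallyEq.rfl
    simp only [hφ'00, smul_zero, sub_zero, zero_smul, hℓs0, smul_smul]
    norm_num
  -- F piece
  have hDF0 : HasFDerivAt F (fderiv ℝ F 0) 0 :=
    ((hF.differentiableOn (by norm_num)).differentiableAt
      (Metric.isOpen_ball.mem_nhds (Metric.mem_ball_self hR₀))).hasFDerivAt
  have hFo : (fun x => F x - fderiv ℝ F 0 x) =o[nhds (0:X)] fun x => x := by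
    have h1 := hDF0.isLittleO
    simpa [hF0] using h1
  have hr1 : (fun t : ℝ => F (t • (P B + z t)) - fderiv ℝ F 0 (t • (P B + z t)))
      =o[nhds (0:ℝ)] fun t : ℝ => t • (P B + z t) := by
    have h1 := hFo.comp_tendsto hutend
    simpa [Function.comp_def] using h1
  have hterm1 := clm_apply_oO (hr1.trans_isBigO huO) huO
  have hr2 : (fun t : ℝ => fderiv ℝ F 0 (t • (P B + z t) - t • P B)) =o[nhds (0:ℝ)] fun t => t :=
    ((fderiv ℝ F 0).isBigO_comp _ _).trans_isLittleO hu1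
  have hterm2 := clm_apply_oO hr2 huO
  have hr3 : (fun t : ℝ => fderiv ℝ F 0 (t • P B)) =O[nhds (0:ℝ)] fun t => t :=
    ((fderiv ℝ F 0).isBigO_comp _ _).trans (isBigO_smul_const (fun t : ℝ => t) (P B) _)
  have hterm3 := clm_apply_Oo hr3 hu1
  have hE : (fun t : ℝ => F (t • (P B + z t)) (t • (P B + z t)) - t ^ 2 • h)
      =o[nhds (0:ℝ)] fun t => t ^ 2 := by
    have h1 := (hterm1.add hterm2).add hterm3
    refine h1.congr' (.of_forall fun t => ?_) EventuallyEq.rfl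
    have hbase : t ^ 2 • h = fderiv ℝ F 0 (t • P B) (t • P B) := by
      rw [hh]
      simp [smul_smul, pow_two]
    beta_reduce
    rw [hbase]
    simp only [ContinuousLinearMap.sub_apply, map_sub]
    abel
  -- ℓ₀ piece
  have hl0 : (fun t : ℝ => ℓ₀ (t • (P B + z t)) - t • B - t ^ 2 • (ℓ₀ a))
      =o[nhds (0:ℝ)] fun t => t ^ 2 := by
    have h1 := (ℓ₀.isBigO_comp
      (fun t : ℝ => t • (P B + z t) - t • P B - t ^ 2 • a) (nhds 0)).trans_isLittleO hu2
    refine h1.congr' (.of_forall fun t => ?_) EventuallyEq.rfl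
    simp only [map_sub, map_smul, hℓPB]
  -- combine: w := ℓ₀ u + ℓs u
  have hw : (fun t : ℝ => (ℓ₀ (t • (P B + z t)) + ℓs (t • (P B + z t))) - t • B
      - t ^ 2 • (ℓ₀ a + g)) =o[nhds (0:ℝ)] fun t => t ^ 2 := by
    have h1 := hl0.add hD
    refine h1.congr' (.of_forall fun t => ?_) EventuallyEq.rfl
    module
  have hwO : (fun t : ℝ => (ℓ₀ (t • (P B + z t)) + ℓs (t • (P B + z t))) - t • B)
      =O[nhds (0:ℝ)] fun t => t ^ 2 := by
    have h1 := hw.isBigO.add (isBigO_smul_const (fun t : ℝ => t ^ 2) (ℓ₀ a + g) (nhds 0))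
    refine h1.congr' (.of_forall fun t => ?_) EventuallyEq.rfl
    module
  have hlamtend : Filter.Tendsto lam (nhds 0) (nhds (0:ℝ)) := by
    have h1 := (hlam.contDiffAt hInhds).continuousAt.tendsto
    rwa [hlam0] at h1
  have hlamo1 : lam =o[nhds (0:ℝ)] fun _ => (1:ℝ) := (Asymptotics.isLittleO_one_iff ℝ).mpr hlamtend
  have hX4a : (fun t : ℝ => lam t • ((ℓ₀ (t • (P B + z t)) + ℓs (t • (P B + z t))) - t • B))
      =o[nhds (0:ℝ)] fun t => t ^ 2 := by
    have h1 := hlamo1.smul_isBigO hwO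
    refine h1.congr' EventuallyEq.rfl (.of_forall fun t => ?_)
    simp
  have hX4b : (fun t : ℝ => (lam t - t * μ) • (t • B)) =o[nhds (0:ℝ)] fun t => t ^ 2 := by
    have h1 := hlam1.smul_isBigO (isBigO_smul_const (fun t : ℝ => t) B (nhds 0))
    refine h1.congr' EventuallyEq.rfl (.of_forall fun t => ?_)
    show (t:ℝ) • t = t ^ 2
    rw [smul_eq_mul, pow_two]
  have hX4 : (fun t : ℝ => lam t • (ℓ₀ (t • (P B + z t)) + ℓs (t • (P B + z t)))
      - t ^ 2 • (μ • B)) =o[nhds (0:ℝ)] fun t => t ^ 2 := by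
    have h1 := hX4a.add hX4b
    refine h1.congr' (.of_forall fun t => ?_) EventuallyEq.rfl
    module
  set ξv : Y := ℓ₀ a + g + μ • B with hξv_def
  have hW : (fun t : ℝ => (1 + lam t) • (ℓ₀ (t • (P B + z t)) + ℓs (t • (P B + z t)))
      - t • B - t ^ 2 • ξv) =o[nhds (0:ℝ)] fun t => t ^ 2 := by
    have h1 := hw.add hX4
    refine h1.congr' (.of_forall fun t => ?_) EventuallyEq.rfl
    rw [hξv_def]
    module
  have hPW : (fun t : ℝ => P ((1 + lam t) • (ℓ₀ (t • (P B + z t)) + ℓs (t • (P B + z t))))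
      - t • P B - t ^ 2 • P ξv) =o[nhds (0:ℝ)] fun t => t ^ 2 := by
    have h1 := (P.isBigO_comp
      (fun t : ℝ => (1 + lam t) • (ℓ₀ (t • (P B + z t)) + ℓs (t • (P B + z t)))
        - t • B - t ^ 2 • ξv) (nhds 0)).trans_isLittleO hW
    refine h1.congr' (.of_forall fun t => ?_) EventuallyEq.rfl
    simp only [map_sub, map_smul]
  have hKF : (fun t : ℝ => K (F (t • (P B + z t)) (t • (P B + z t))) - t ^ 2 • K h)
      =o[nhds (0:ℝ)] fun t => t ^ 2 := by
    have h1 := (K.isBigO_comp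
      (fun t : ℝ => F (t • (P B + z t)) (t • (P B + z t)) - t ^ 2 • h) (nhds 0)).trans_isLittleO hE
    refine h1.congr' (.of_forall fun t => ?_) EventuallyEq.rfl
    simp only [map_sub, map_smul]
  -- the fixed-point identity
  have heq : ∀ t ∈ Set.Ioo (-ε₀) ε₀,
      t • (P B + z t) = P ((1 + lam t) • (ℓ₀ (t • (P B + z t)) + ℓs (t • (P B + z t))))
        - K (F (t • (P B + z t)) (t • (P B + z t))) := by
    intro t ht
    have h2' : (T (t • (P B + z t))).2 = -(F (t • (P B + z t)) (t • (P B + z t))) :=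
      eq_neg_of_add_eq_zero_left (hsol₂ t ht)
    have hpair : T (t • (P B + z t)) =
        ((1 + lam t) • (ℓ₀ (t • (P B + z t)) + ℓs (t • (P B + z t))),
          -(F (t • (P B + z t)) (t • (P B + z t)))) :=
      Prod.ext_iff.mpr ⟨hsol₁ t ht, h2'⟩
    have h1 := congrArg T.symm hpair
    rw [T.symm_apply_apply, hsymmPK] at h1
    rw [map_neg, ← sub_eq_add_neg] at h1
    exact h1
  -- extract the ε² coefficient
  have hceq : a - P ξv + K h = 0 := by
    apply eq_zero_of_sq_smul_isLittleO
    have hcomb := (hPW.sub hu2).sub hKF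
    refine hcomb.congr' ?_ EventuallyEq.rfl
    filter_upwards [hInhds] with t ht
    have hE0 : t • (P B + z t)
        - (P ((1 + lam t) • (ℓ₀ (t • (P B + z t)) + ℓs (t • (P B + z t))))
          - K (F (t • (P B + z t)) (t • (P B + z t)))) = 0 :=
      sub_eq_zero.mpr (heq t ht)
    linear_combination (norm := module) -hE0
  have ha' : a = P ξv - K h := by
    have h9 : a - (P ξv - K h) = 0 := by rw [← hceq]; abel
    exact sub_eq_zero.mp h9
  -- k a = 0
  have hka : k a = 0 := by
    have hkz : (fun s => k (z s)) =ᶠ[nhds (0:ℝ)] fun _ => (0:ℝ) := by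
      filter_upwards [hInhds] with t ht
      have h1 := hPkz t ht
      rw [hPk] at h1
      rcases smul_eq_zero.mp h1 with h2 | h2
      · exact h2
      · exact absurd h2 hPBne
    have hd1 : HasDerivAt (fun s => k (z s)) (k a) 0 := by
      have h1 := k.hasFDerivAt.comp_hasDerivAt 0 hzd
      simpa [Function.comp_def] using h1
    have hd2 : HasDerivAt (fun s => k (z s)) 0 0 :=
      (hasDerivAt_const (0:ℝ) (0:ℝ)).congr_of_eventuallyEq hkz
    exact hd1.unique hd2
  -- value of ξv - Q₀ ξv
  have hPξv : P ξv = a + K h := by rw [ha']; abel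
  have hm1val : ξv - Q₀ ξv = μ • B + g - ℓ₀ (K h) := by
    rw [hQ₀, hPξv, map_add, hξv_def]
    abel
  -- μ = ζ
  have hm1 : μ • B + g - ℓ₀ (K h) ∈ LinearMap.range ((ContinuousLinearMap.id ℝ Y - Q₀ : Y →L[ℝ] Y) : Y →ₗ[ℝ] Y) := by
    refine LinearMap.mem_range.mpr ⟨ξv, ?_⟩
    show (ContinuousLinearMap.id ℝ Y - Q₀) ξv = _
    rw [ContinuousLinearMap.sub_apply, ContinuousLinearMap.id_apply]
    exact hm1val
  have hm2 : ζ • B + g - ℓ₀ (K h) ∈ LinearMap.range ((ContinuousLinearMap.id ℝ Y - Q₀ : Y →L[ℝ] Y) : Y →ₗ[ℝ] Y) := by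
    have h1 : P_M (ℓ₀ (K h) - g) ∈ LinearMap.range (P_M : Y →ₗ[ℝ] Y) := LinearMap.mem_range_self _ _
    rw [hPMrange] at h1
    have h2 : P_M (ℓ₀ (K h) - g) = ℓ₀ (K h) - g - ζ • B := by rw [← hζ]; abel
    rw [h2] at h1
    have h3 := Submodule.neg_mem _ h1
    have h4 : -(ℓ₀ (K h) - g - ζ • B) = ζ • B + g - ℓ₀ (K h) := by abel
    rwa [h4] at h3
  have hsubm : (μ - ζ) • B ∈ LinearMap.range ((ContinuousLinearMap.id ℝ Y - Q₀ : Y →L[ℝ] Y) : Y →ₗ[ℝ] Y) := by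
    have h1 := Submodule.sub_mem _ hm1 hm2
    have h5 : (μ • B + g - ℓ₀ (K h)) - (ζ • B + g - ℓ₀ (K h)) = (μ - ζ) • B := by
      rw [sub_smul]; abel
    rwa [h5] at h1
  have hμζ : μ = ζ := by
    by_contra hne
    apply hBrange
    have h6 : B = (μ - ζ)⁻¹ • ((μ - ζ) • B) := by
      rw [smul_smul, inv_mul_cancel₀ (sub_ne_zero.mpr hne), one_smul]
    rw [h6]
    exact Submodule.smul_mem _ _ hsubm
  have hcond1 : ξv - Q₀ ξv = ζ • B + g - ℓ₀ (K h) := by rw [hm1val, hμζ]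
  have hcond2 : k (P ξv) = k (K h) := by rw [hPξv, map_add, hka, zero_add]
  have huniq : ∀ y : Y, (y - Q₀ y = ζ • B + g - ℓ₀ (K h) ∧ k (P y) = k (K h)) → y = ξv := by
    intro y hy
    obtain ⟨hy1, hy2⟩ := hy
    have hdk : y - ξv ∈ LinearMap.ker ((ContinuousLinearMap.id ℝ Y - Q₀ : Y →L[ℝ] Y) : Y →ₗ[ℝ] Y) := by
      rw [LinearMap.mem_ker]
      show (ContinuousLinearMap.id ℝ Y - Q₀) (y - ξv) = 0
      rw [ContinuousLinearMap.sub_apply, ContinuousLinearMap.id_apply, map_sub]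
      have h1 : y - ξv - (Q₀ y - Q₀ ξv) = (y - Q₀ y) - (ξv - Q₀ ξv) := by abel
      rw [h1, hy1, hcond1, sub_self]
    rw [hBker] at hdk
    obtain ⟨cc, hcc⟩ := Submodule.mem_span_singleton.mp hdk
    have hk0 : k (P (y - ξv)) = 0 := by
      rw [map_sub, map_sub, hy2, hcond2, sub_self]
    rw [← hcc, map_smul, map_smul] at hk0
    rw [hkPB, smul_eq_mul, mul_one] at hk0
    have h2 : y - ξv = 0 := by rw [← hcc, hk0, zero_smul]
    have h3 := sub_eq_zero.mp h2
    exact h3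
  refine ⟨⟨ξv, ⟨hcond1, hcond2⟩, huniq⟩, ?_⟩
  intro ξ hξ
  have hξeq : ξ = ξv := huniq ξ hξ
  refine ⟨hμζ, ?_, ?_, ?_⟩
  · rw [hξeq]
    exact ha'
  · have h7 := hlam1
    rw [hμζ] at h7
    refine (h7.congr' (.of_forall fun t => ?_) EventuallyEq.rfl).mono nhdsWithin_le_nhds
    show lam t - t * ζ = lam t - ζ * t
    rw [mul_comm]
  · rw [hξeq, ← ha']
    exact hu2.mono nhdsWithin_le_nhds
end
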